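/- arXiv:2110.04554 — 11 statements merged into one kernel-verified Lean document; each statement's English description precedes it below -/
import Mathlib

section
/- Let X be a finite set with weight m : X → (0,∞), and let H be a selfadjoint operator on ℓ²(X,m). If H is diagonally dominant (i.e., H x(x) ≥ Σ_{y≠x} |H y(x)| for all x ∈ X), then for all t ≥ 0 and all f : X → ℝ, ‖e^{-tH} f‖_∞ ≤ ‖f‖_∞. -/
open NormedSpace

attribute [local instance] Matrix.linftyOpSemiNormedRing Matrix.linftyOpNormedRing
  Matrix.linftyOpNormedAlgebra

/-- In a Banach algebra with `‖1‖ = 1`, `‖exp x‖ ≤ exp ‖x‖`. -/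
lemma my_norm_exp_le {𝔸 : Type*} [NormedRing 𝔸] [NormedAlgebra ℝ 𝔸] [CompleteSpace 𝔸]
    [NormOneClass 𝔸] (x : 𝔸) : ‖exp x‖ ≤ Real.exp ‖x‖ := by
  rw [Real.exp_eq_exp_ℝ, exp_eq_tsum (𝕂 := ℝ), exp_eq_tsum (𝕂 := ℝ)]
  refine (norm_tsum_le_tsum_norm (norm_expSeries_summable' (𝕂 := ℝ) x)).trans ?_
  refine Summable.tsum_le_tsum (fun n => ?_) (norm_expSeries_summable' x) (expSeries_summable' ‖x‖)
  rw [norm_smul, norm_inv, Real.norm_natCast, smul_eq_mul]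
  exact mul_le_mul_of_nonneg_left (norm_pow_le x n) (by positivity)

/-- If a selfadjoint operator `H` on `ℓ²(X,m)` is diagonally dominant,
then the semigroup `e^{-tH}` is a contraction in the sup norm. -/
theorem stmt_0 {X : Type*} [Fintype X] [DecidableEq X] [Nonempty X]
    (m : X → ℝ) (hm : ∀ x, 0 < m x)
    (H : Matrix X X ℝ)
    (hsa : ∀ x y, m x * H x y = m y * H y x)
    (hdd : ∀ x, ∑ y ∈ Finset.univ.erase x, |H x y| ≤ H x x)
    (t : ℝ) (ht : 0 ≤ t) (f : X → ℝ) :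
    ‖(NormedSpace.exp (-(t • H))).mulVec f‖ ≤ ‖f‖ := by
  classical
  set c : ℝ := Finset.univ.sup' Finset.univ_nonempty (fun x => H x x) with hc
  have hHc : ∀ x, H x x ≤ c := fun x => Finset.le_sup' (f := fun y => H y y) (Finset.mem_univ x)
  have hH0 : ∀ x, 0 ≤ H x x := fun x =>
    le_trans (Finset.sum_nonneg fun y _ => abs_nonneg _) (hdd x)
  have hc0 : 0 ≤ c := le_trans (hH0 (Classical.arbitrary X)) (hHc _)
  set A : Matrix X X ℝ := c • (1 : Matrix X X ℝ) - H with hA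
  -- row-sum bound for A
  have hAnorm : ‖A‖ ≤ c := by
    rw [Matrix.linfty_opNorm_def]
    have : ((Finset.univ : Finset X).sup fun i => ∑ j, ‖A i j‖₊) ≤ ⟨c, hc0⟩ := by
      refine Finset.sup_le fun i _ => ?_
      refine NNReal.coe_le_coe.mp ?_
      push_cast
      have hrow : ∑ j, ‖A i j‖ = (∑ j ∈ Finset.univ.erase i, ‖A i j‖) + ‖A i i‖ :=
        (Finset.sum_erase_add _ _ (Finset.mem_univ i)).symm
      have h1 : ∀ j ∈ Finset.univ.erase i, ‖A i j‖ = |H i j| := by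
        intro j hj
        have hij : i ≠ j := (Finset.ne_of_mem_erase hj).symm
        simp [hA, Matrix.sub_apply, Matrix.smul_apply, Matrix.one_apply, hij, abs_neg]
      have h2 : ‖A i i‖ = c - H i i := by
        simp only [hA, Matrix.sub_apply, Matrix.smul_apply, Matrix.one_apply_eq, smul_eq_mul,
          mul_one, Real.norm_eq_abs]
        rw [abs_of_nonneg (by linarith [hHc i])]
      calc ∑ j, ‖A i j‖ = (∑ j ∈ Finset.univ.erase i, |H i j|) + (c - H i i) := by
            rw [hrow, Finset.sum_congr rfl h1, h2]
        _ ≤ H i i + (c - H i i) := by linarith [hdd i]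
        _ = c := by ring
    exact_mod_cast this
  -- split the exponent
  have hsplit : -(t • H) = (-(t * c)) • (1 : Matrix X X ℝ) + t • A := by
    rw [hA]; module
  have hcomm : Commute ((-(t * c)) • (1 : Matrix X X ℝ)) (t • A) :=
    ((Commute.one_left (A)).smul_left _).smul_right _
  have hexp1 : exp ((-(t * c)) • (1 : Matrix X X ℝ))
      = Real.exp (-(t * c)) • (1 : Matrix X X ℝ) := by
    have h := (algebraMap_exp_comm (𝔸 := Matrix X X ℝ) (-(t * c))).symm
    rw [Algebra.algebraMap_eq_smul_one, Algebra.algebraMap_eq_smul_one] at h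
    rw [Real.exp_eq_exp_ℝ]; exact h
  have key : exp (-(t • H)) = Real.exp (-(t * c)) • exp (t • A) := by
    rw [hsplit, Matrix.exp_add_of_commute _ _ hcomm, hexp1, smul_mul_assoc, one_mul]
  rw [key, Matrix.smul_mulVec, norm_smul, Real.norm_eq_abs,
    abs_of_nonneg (Real.exp_pos _).le]
  calc Real.exp (-(t * c)) * ‖(exp (t • A)).mulVec f‖
      ≤ Real.exp (-(t * c)) * (‖exp (t • A)‖ * ‖f‖) := by
        exact mul_le_mul_of_nonneg_left (Matrix.linfty_opNorm_mulVec _ _) (Real.exp_pos _).le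
    _ ≤ Real.exp (-(t * c)) * (Real.exp (t * c) * ‖f‖) := by
        refine mul_le_mul_of_nonneg_left (mul_le_mul_of_nonneg_right ?_ (norm_nonneg f))
          (Real.exp_pos _).le
        refine (my_norm_exp_le _).trans (Real.exp_le_exp.2 ?_)
        rw [norm_smul, Real.norm_eq_abs, abs_of_nonneg ht]
        exact mul_le_mul_of_nonneg_left hAnorm ht
    _ = ‖f‖ := by rw [← mul_assoc, ← Real.exp_add]; simp
end

section
/- Let X be a finite set with weight m : X → (0,∞), and let H be a selfadjoint operator on ℓ²(X,m). If ‖e^{-tH} f‖_∞ ≤ ‖f‖_∞ for all t ≥ 0 and all f : X → ℝ, then H is diagonally dominant, i.e., H x(x) ≥ Σ_{y≠x} |H y(x)| for all x ∈ X. -/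
open NormedSpace

attribute [local instance] Matrix.linftyOpNormedAddCommGroup Matrix.linftyOpNormedRing
  Matrix.linftyOpNormedAlgebra

lemma mul_sign_eq_abs (r : ℝ) : r * Real.sign r = |r| := by
  rcases lt_trichotomy r 0 with h | h | h
  · simp [Real.sign_of_neg h, abs_of_neg h]
  · simp [h]
  · simp [Real.sign_of_pos h, abs_of_pos h]

lemma abs_sign_le_one (r : ℝ) : |Real.sign r| ≤ 1 := by
  rcases lt_trichotomy r 0 with h | h | h
  · simp [Real.sign_of_neg h]
  · simp [h]
  · simp [Real.sign_of_pos h]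

/-- If the semigroup `e^{-tH}` of a selfadjoint operator `H` on `ℓ²(X,m)`
is a contraction in the sup norm, then `H` is diagonally dominant. -/
theorem stmt_1 {X : Type*} [Fintype X] [DecidableEq X] [Nonempty X]
    (m : X → ℝ) (hm : ∀ x, 0 < m x)
    (H : Matrix X X ℝ)
    (hsa : ∀ x y, m x * H x y = m y * H y x)
    (hcontr : ∀ t : ℝ, 0 ≤ t → ∀ f : X → ℝ,
      ‖(NormedSpace.exp (-(t • H))).mulVec f‖ ≤ ‖f‖) :
    ∀ x, ∑ y ∈ Finset.univ.erase x, |H x y| ≤ H x x := by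
  intro x
  set f : X → ℝ := fun y => if y = x then 1 else -Real.sign (H x y) with hf
  have hfnorm : ‖f‖ ≤ 1 := by
    rw [pi_norm_le_iff_of_nonneg zero_le_one]
    intro y
    by_cases h : y = x
    · simp [hf, h]
    · simpa [hf, h, Real.norm_eq_abs] using abs_sign_le_one (H x y)
  set g : ℝ → ℝ := fun t => (NormedSpace.exp (t • (-H))).mulVec f x with hg
  have hg0 : g 0 = 1 := by
    simp [hg, NormedSpace.exp_zero, Matrix.one_mulVec, hf]
  have hgle : ∀ t : ℝ, 0 < t → g t ≤ 1 := by
    intro t ht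
    have h1 : g t ≤ ‖(NormedSpace.exp (t • (-H))).mulVec f‖ := by
      calc g t ≤ |g t| := le_abs_self _
        _ ≤ ‖(NormedSpace.exp (t • (-H))).mulVec f‖ := by
          simpa [Real.norm_eq_abs, hg] using
            norm_le_pi_norm ((NormedSpace.exp (t • (-H))).mulVec f) x
    have h2 : ‖(NormedSpace.exp (t • (-H))).mulVec f‖ ≤ ‖f‖ := by
      have h := hcontr t ht.le f
      rwa [smul_neg]
    linarith
  -- the evaluation continuous linear map
  let L : Matrix X X ℝ →ₗ[ℝ] ℝ :=
    { toFun := fun M => M.mulVec f x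
      map_add' := by intro M N; simp [Matrix.add_mulVec]
      map_smul' := by intro c M; simp [Matrix.smul_mulVec] }
  have hdexp : HasDerivAt (fun t : ℝ => NormedSpace.exp (t • (-H))) (-H) 0 := by
    have h := hasDerivAt_exp_smul_const (𝕂 := ℝ) (-H) (0 : ℝ)
    simp at h ⊢
    exact h
  have hd : HasDerivAt g ((-H).mulVec f x) 0 := by
    have h := (L.toContinuousLinearMap.hasFDerivAt
      (x := NormedSpace.exp ((0:ℝ) • (-H)))).comp_hasDerivAt 0 hdexp
    simp [Function.comp, hg, L] at h ⊢
    exact h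
  -- derivative at 0 from the right is ≤ 0
  have hslope : Filter.Tendsto (slope g 0) (nhdsWithin 0 (Set.Ioi 0))
      (nhds ((-H).mulVec f x)) :=
    (hasDerivAt_iff_tendsto_slope.mp hd).mono_left
      (nhdsWithin_mono 0 (fun t ht => ne_of_gt ht))
  have hle : (-H).mulVec f x ≤ 0 := by
    refine le_of_tendsto hslope ?_
    filter_upwards [self_mem_nhdsWithin] with t ht
    have ht' : 0 < t := ht
    have h1 : g t - g 0 ≤ 0 := by
      have := hgle t ht'
      linarith [hg0]
    have h2 : (g t - g 0) / t ≤ 0 := div_nonpos_of_nonpos_of_nonneg h1 ht'.le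
    simpa [slope_def_field, div_eq_inv_mul] using h2
  have hmv : H.mulVec f x = H x x - ∑ y ∈ Finset.univ.erase x, |H x y| := by
    rw [Matrix.mulVec, dotProduct]
    rw [← Finset.add_sum_erase _ _ (Finset.mem_univ x)]
    have h1 : H x x * f x = H x x := by simp [hf]
    have h2 : ∀ y ∈ Finset.univ.erase x, H x y * f y = -|H x y| := by
      intro y hy
      have hyx : y ≠ x := Finset.ne_of_mem_erase hy
      simp [hf, hyx, mul_sign_eq_abs]
    rw [h1, Finset.sum_congr rfl h2, Finset.sum_neg_distrib]
    ring
  have hpos : 0 ≤ H.mulVec f x := by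
    have h3 : (-H).mulVec f x = -(H.mulVec f x) := by simp [Matrix.neg_mulVec]
    linarith [h3 ▸ hle]
  linarith [hmv ▸ hpos]
end

section
/- Let X be a finite set with weight m : X → (0,∞), and let H be a selfadjoint operator on ℓ²(X,m). If H is diagonally dominant, then for every p ∈ [1,∞) and every f : X → ℝ, the function t ↦ ‖e^{-tH} f‖_p is nonincreasing, where ‖f‖_p^p := Σ_x m(x)|f(x)|^p. -/
open Filter Real NormedSpace

lemma double_sum_erase_comm {X : Type*} [Fintype X] [DecidableEq X] (h : X → X → ℝ) :
    ∑ x, ∑ y ∈ Finset.univ.erase x, h x y = ∑ x, ∑ y ∈ Finset.univ.erase x, h y x := by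
  have e1 : ∀ x : X, ∑ y ∈ Finset.univ.erase x, h x y = (∑ y, h x y) - h x x := fun x =>
    Finset.sum_erase_eq_sub (Finset.mem_univ x)
  have e2 : ∀ x : X, ∑ y ∈ Finset.univ.erase x, h y x = (∑ y, h y x) - h x x := fun x =>
    Finset.sum_erase_eq_sub (f := fun y => h y x) (Finset.mem_univ x)
  simp_rw [e1, e2, Finset.sum_sub_distrib]
  rw [Finset.sum_comm]

lemma sign_mul_self' (s : ℝ) : Real.sign s * s = |s| := by
  rcases lt_trichotomy s 0 with h | h | h
  · rw [Real.sign_of_neg h, abs_of_neg h]; ring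
  · simp [h]
  · rw [Real.sign_of_pos h, abs_of_pos h]; ring

lemma sign_abs_rpow_mul {p : ℝ} (hp : 1 < p) (s : ℝ) :
    Real.sign s * |s| ^ (p - 1) * s = |s| ^ p := by
  rcases eq_or_ne s 0 with rfl | hs
  · simp [Real.zero_rpow (by linarith : p ≠ 0)]
  · have h0 : (0 : ℝ) < |s| := abs_pos.2 hs
    have : Real.sign s * |s| ^ (p - 1) * s = |s| ^ (p - 1) * (Real.sign s * s) := by ring
    rw [this, sign_mul_self', ← Real.rpow_add_one h0.ne']
    norm_num

lemma hasDerivAt_abs_rpow2 {p : ℝ} (hp : 1 < p) (s : ℝ) :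
    HasDerivAt (fun x : ℝ => |x| ^ p) (p * (Real.sign s * |s| ^ (p - 1))) s := by
  rcases lt_trichotomy s 0 with h | h | h
  · have h1 : HasDerivAt (fun x : ℝ => (-x) ^ p) (p * (-s) ^ (p - 1) * (-1)) s := by
      have := (Real.hasDerivAt_rpow_const (x := -s) (p := p)
        (Or.inl (by linarith))).comp s (hasDerivAt_neg s)
      simpa [Function.comp_def] using this
    have h2 : (fun x : ℝ => |x| ^ p) =ᶠ[nhds s] fun x : ℝ => (-x) ^ p := by
      filter_upwards [eventually_lt_nhds h] with x hx
      rw [abs_of_neg hx]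
    have := h1.congr_of_eventuallyEq h2
    refine this.congr_deriv ?_
    rw [Real.sign_of_neg h, abs_of_neg h]; ring
  · subst h
    have key : HasDerivAt (fun x : ℝ => |x| ^ p) 0 0 := by
      rw [hasDerivAt_iff_tendsto_slope]
      have hb : Tendsto (fun x : ℝ => |x| ^ (p - 1)) (nhdsWithin 0 {(0:ℝ)}ᶜ) (nhds 0) := by
        have hc : ContinuousAt (fun x : ℝ => |x| ^ (p - 1)) 0 :=
          (continuous_abs.rpow_const (fun x => Or.inr (by linarith))).continuousAt
        have h0 : |(0:ℝ)| ^ (p - 1) = 0 := by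
          simp [Real.zero_rpow (by linarith : p - 1 ≠ 0)]
        have := hc.tendsto.mono_left (nhdsWithin_le_nhds (s := {(0:ℝ)}ᶜ))
        rwa [h0] at this
      apply squeeze_zero_norm _ hb
      intro x
      rcases eq_or_ne x 0 with rfl | hx
      · simp [slope, Real.zero_rpow (by linarith : p - 1 ≠ 0)]
      · have h0 : (0 : ℝ) < |x| := abs_pos.2 hx
        rw [slope_def_field]
        simp only [abs_zero, Real.zero_rpow (by linarith : p ≠ 0), sub_zero, zero_sub]
        rw [Real.norm_eq_abs, abs_div, abs_of_nonneg (Real.rpow_nonneg (abs_nonneg x) p),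
          Real.rpow_sub h0, Real.rpow_one]
      -- done?
    convert key using 1
    simp
  · have h1 : HasDerivAt (fun x : ℝ => x ^ p) (p * s ^ (p - 1)) s :=
      Real.hasDerivAt_rpow_const (Or.inl h.ne')
    have h2 : (fun x : ℝ => |x| ^ p) =ᶠ[nhds s] fun x : ℝ => x ^ p := by
      filter_upwards [eventually_gt_nhds h] with x hx
      rw [abs_of_pos hx]
    have := h1.congr_of_eventuallyEq h2
    refine this.congr_deriv ?_
    rw [Real.sign_of_pos h, abs_of_pos h]; ring

lemma key_nonneg {X : Type*} [Fintype X] [DecidableEq X]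
    (m : X → ℝ) (hm : ∀ x, 0 < m x) (H : Matrix X X ℝ)
    (hsa : ∀ x y, m x * H x y = m y * H y x)
    (hdd : ∀ x, ∑ y ∈ Finset.univ.erase x, |H x y| ≤ H x x)
    {p : ℝ} (hp : 1 < p) (u : X → ℝ) :
    0 ≤ ∑ x, m x * (Real.sign (u x) * |u x| ^ (p - 1)) * H.mulVec u x := by
  have hp0 : (0 : ℝ) < p := by linarith
  set c : X → ℝ := fun x => |u x| ^ p with hc
  set φ : X → ℝ := fun x => Real.sign (u x) * |u x| ^ (p - 1) with hφ
  have hcnn : ∀ x, 0 ≤ c x := fun x => Real.rpow_nonneg (abs_nonneg _) _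
  have habs : ∀ x y, m x * |H x y| = m y * |H y x| := by
    intro x y
    rw [← abs_of_pos (hm x), ← abs_mul, hsa x y, abs_mul, abs_of_pos (hm y)]
  have hq : Real.HolderConjugate p (p / (p - 1)) := Real.HolderConjugate.conjExponent hp
  -- Young's inequality in the form we need
  have young : ∀ x y : X, |u x| ^ (p - 1) * |u y| ≤ c x * ((p - 1) / p) + c y * (1 / p) := by
    intro x y
    have h1 := Real.young_inequality_of_nonneg
      (Real.rpow_nonneg (abs_nonneg (u x)) (p - 1)) (abs_nonneg (u y)) hq.symm
    have e1 : (|u x| ^ (p - 1)) ^ (p / (p - 1)) = c x := by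
      rw [← Real.rpow_mul (abs_nonneg (u x))]
      congr 1
      have h1 : p - 1 ≠ 0 := by linarith
      field_simp
    rw [e1] at h1
    have e2 : c x / (p / (p - 1)) = c x * ((p - 1) / p) := by
      rw [div_div_eq_mul_div, mul_div_assoc]
    calc |u x| ^ (p - 1) * |u y| ≤ c x / (p / (p - 1)) + |u y| ^ p / p := h1
      _ = c x * ((p - 1) / p) + c y * (1 / p) := by rw [e2]; ring
  -- expansion of the quadratic form
  have expand : ∑ x, m x * φ x * H.mulVec u x
      = (∑ x, m x * H x x * c x)
        + ∑ x, ∑ y ∈ Finset.univ.erase x, m x * φ x * (H x y * u y) := by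
    simp_rw [Matrix.mulVec, dotProduct, Finset.mul_sum]
    rw [← Finset.sum_add_distrib]
    refine Finset.sum_congr rfl fun x _ => ?_
    rw [← Finset.add_sum_erase _ _ (Finset.mem_univ x)]
    congr 1
    have hs := sign_abs_rpow_mul hp (u x)
    calc m x * φ x * (H x x * u x) = m x * H x x * (φ x * u x) := by ring
      _ = m x * H x x * c x := by rw [hφ, hc]; rw [hs]
  -- bound for the off-diagonal terms
  have offbound : ∀ x : X, ∀ y ∈ Finset.univ.erase x,
      -(m x * |H x y| * (c x * ((p - 1) / p) + c y * (1 / p))) ≤ m x * φ x * (H x y * u y) := by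
    intro x y _
    have h1 : |m x * φ x * (H x y * u y)| ≤ m x * |H x y| * (|u x| ^ (p - 1) * |u y|) := by
      rw [abs_mul (m x * φ x), abs_mul (m x), abs_mul (H x y), abs_of_pos (hm x)]
      have hφb : |φ x| ≤ |u x| ^ (p - 1) := by
        rw [hφ, abs_mul, abs_of_nonneg (Real.rpow_nonneg (abs_nonneg _) _)]
        calc |Real.sign (u x)| * |u x| ^ (p - 1) ≤ 1 * |u x| ^ (p - 1) := by
              apply mul_le_mul_of_nonneg_right _ (Real.rpow_nonneg (abs_nonneg _) _)
              rcases lt_trichotomy (u x) 0 with h | h | h <;>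
                simp [Real.sign_of_neg, Real.sign_of_pos, h]
          _ = |u x| ^ (p - 1) := one_mul _
      calc m x * |φ x| * (|H x y| * |u y|)
          ≤ m x * (|u x| ^ (p - 1)) * (|H x y| * |u y|) := by
            apply mul_le_mul_of_nonneg_right _ (by positivity)
            exact mul_le_mul_of_nonneg_left hφb (hm x).le
        _ = m x * |H x y| * (|u x| ^ (p - 1) * |u y|) := by ring
    have h2 : m x * |H x y| * (|u x| ^ (p - 1) * |u y|)
        ≤ m x * |H x y| * (c x * ((p - 1) / p) + c y * (1 / p)) :=
      mul_le_mul_of_nonneg_left (young x y) (mul_nonneg (hm x).le (abs_nonneg _))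
    have h3 := neg_abs_le (m x * φ x * (H x y * u y))
    linarith
  -- swap the two indices in the mixed sum
  have swap2 : ∑ x, ∑ y ∈ Finset.univ.erase x, m x * |H x y| * c y
      = ∑ x, ∑ y ∈ Finset.univ.erase x, m x * |H x y| * c x := by
    have step1 : ∑ x, ∑ y ∈ Finset.univ.erase x, m x * |H x y| * c y
        = ∑ x, ∑ y ∈ Finset.univ.erase x, m y * |H y x| * c y := by
      refine Finset.sum_congr rfl fun x _ => Finset.sum_congr rfl fun y _ => ?_
      rw [habs x y]
    rw [step1]
    exact (double_sum_erase_comm (fun a b => m a * |H a b| * c a)).symm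
  -- lower bound for the mixed sum
  have hbsum : ∑ x, ∑ y ∈ Finset.univ.erase x,
      m x * |H x y| * (c x * ((p - 1) / p) + c y * (1 / p))
      = ∑ x, ∑ y ∈ Finset.univ.erase x, m x * |H x y| * c x := by
    have hone : (p - 1) / p + 1 / p = 1 := by field_simp; ring
    have hsplit : ∀ x y : X, m x * |H x y| * (c x * ((p - 1) / p) + c y * (1 / p))
        = m x * |H x y| * c x * ((p - 1) / p) + m x * |H x y| * c y * (1 / p) := by
      intro x y; ring
    simp_rw [hsplit, Finset.sum_add_distrib]
    have swap2' : ∑ x, ∑ y ∈ Finset.univ.erase x, m x * |H x y| * c y * (1 / p)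
        = ∑ x, ∑ y ∈ Finset.univ.erase x, m x * |H x y| * c x * (1 / p) := by
      calc ∑ x, ∑ y ∈ Finset.univ.erase x, m x * |H x y| * c y * (1 / p)
          = ∑ x, ∑ y ∈ Finset.univ.erase x, m y * |H y x| * c y * (1 / p) :=
            Finset.sum_congr rfl fun x _ => Finset.sum_congr rfl fun y _ => by rw [habs x y]
        _ = ∑ x, ∑ y ∈ Finset.univ.erase x, m x * |H x y| * c x * (1 / p) :=
            (double_sum_erase_comm (fun a b => m a * |H a b| * c a * (1 / p))).symm
    rw [swap2', ← Finset.sum_add_distrib]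
    refine Finset.sum_congr rfl fun x _ => ?_
    rw [← Finset.sum_add_distrib]
    refine Finset.sum_congr rfl fun y _ => ?_
    rw [← mul_add, hone, mul_one]
  have offsum : -(∑ x, ∑ y ∈ Finset.univ.erase x, m x * |H x y| * c x)
      ≤ ∑ x, ∑ y ∈ Finset.univ.erase x, m x * φ x * (H x y * u y) := by
    have hb : ∑ x, ∑ y ∈ Finset.univ.erase x,
        -(m x * |H x y| * (c x * ((p - 1) / p) + c y * (1 / p)))
        ≤ ∑ x, ∑ y ∈ Finset.univ.erase x, m x * φ x * (H x y * u y) :=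
      Finset.sum_le_sum fun x _ => Finset.sum_le_sum (offbound x)
    refine le_trans (le_of_eq ?_) hb
    rw [← hbsum]
    simp_rw [Finset.sum_neg_distrib]
  -- put everything together
  rw [expand]
  have perx : ∀ x : X, ∑ y ∈ Finset.univ.erase x, m x * |H x y| * c x ≤ m x * H x x * c x := by
    intro x
    have e : ∑ y ∈ Finset.univ.erase x, m x * |H x y| * c x
        = (∑ y ∈ Finset.univ.erase x, |H x y|) * (m x * c x) := by
      rw [Finset.sum_mul]; exact Finset.sum_congr rfl fun y _ => by ring
    rw [e]
    calc (∑ y ∈ Finset.univ.erase x, |H x y|) * (m x * c x)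
        ≤ H x x * (m x * c x) :=
          mul_le_mul_of_nonneg_right (hdd x) (mul_nonneg (hm x).le (hcnn x))
      _ = m x * H x x * c x := by ring
  have hsum := Finset.sum_le_sum fun x (_ : x ∈ Finset.univ) => perx x
  linarith

attribute [local instance] Matrix.linftyOpNormedRing Matrix.linftyOpNormedAlgebra

section main

variable {X : Type*} [Fintype X] [DecidableEq X] [Nonempty X]

noncomputable def mulVecEvalCLM (f : X → ℝ) (x : X) : Matrix X X ℝ →L[ℝ] ℝ :=
  LinearMap.toContinuousLinearMap
    { toFun := fun M => M.mulVec f x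
      map_add' := fun A B => by simp [Matrix.add_mulVec]
      map_smul' := fun r A => by simp [Matrix.smul_mulVec] }

lemma hasDerivAt_exp_mulVec (H : Matrix X X ℝ) (f : X → ℝ) (x : X) (t : ℝ) :
    HasDerivAt (fun t : ℝ => (NormedSpace.exp (-(t • H))).mulVec f x)
      (-(H.mulVec ((NormedSpace.exp (-(t • H))).mulVec f)) x) t := by
  have hE : HasDerivAt (fun t : ℝ => NormedSpace.exp (t • (-H)))
      ((-H) * NormedSpace.exp (t • (-H))) t := hasDerivAt_exp_smul_const' (-H) t
  have hL := ((mulVecEvalCLM f x).hasFDerivAt.comp_hasDerivAt t hE)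
  have e1 : ∀ s : ℝ, -(s • H) = s • (-H) := fun s => (smul_neg s H).symm
  have e2 : (mulVecEvalCLM f x) ((-H) * NormedSpace.exp (t • (-H)))
      = -(H.mulVec ((NormedSpace.exp (-(t • H))).mulVec f)) x := by
    show ((-H) * NormedSpace.exp (t • (-H))).mulVec f x = _
    rw [← Matrix.mulVec_mulVec, Matrix.neg_mulVec, e1]
    rfl
  replace hL := hL.congr_deriv e2
  have efun : (⇑(mulVecEvalCLM f x) ∘ fun t : ℝ => NormedSpace.exp (t • -H))
      = fun t : ℝ => (NormedSpace.exp (-(t • H))).mulVec f x := by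
    funext s
    show (NormedSpace.exp (s • -H)).mulVec f x = _
    rw [← e1]
  rw [efun] at hL
  exact hL

end main

lemma core_antitone {X : Type*} [Fintype X] [DecidableEq X] [Nonempty X]
    (m : X → ℝ) (hm : ∀ x, 0 < m x)
    (H : Matrix X X ℝ)
    (hsa : ∀ x y, m x * H x y = m y * H y x)
    (hdd : ∀ x, ∑ y ∈ Finset.univ.erase x, |H x y| ≤ H x x)
    {q : ℝ} (hq : 1 < q) (f : X → ℝ) :
    AntitoneOn (fun t : ℝ => ∑ x, m x * |(NormedSpace.exp (-(t • H))).mulVec f x| ^ q)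
      (Set.Ici (0 : ℝ)) := by
  set u : ℝ → X → ℝ := fun t => (NormedSpace.exp (-(t • H))).mulVec f with hu
  set G : ℝ → ℝ := fun t => ∑ x, m x *
    (q * (Real.sign (u t x) * |u t x| ^ (q - 1)) * (-(H.mulVec (u t)) x)) with hG
  have hF : ∀ t : ℝ, HasDerivAt (fun t : ℝ => ∑ x, m x * |u t x| ^ q) (G t) t := by
    intro t
    apply HasDerivAt.fun_sum
    intro x _
    have h1 : HasDerivAt (fun t : ℝ => u t x) (-(H.mulVec (u t)) x) t :=
      hasDerivAt_exp_mulVec H f x t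
    have h2 := (hasDerivAt_abs_rpow2 hq (u t x)).comp t h1
    exact h2.const_mul (m x)
  have hGle : ∀ t : ℝ, G t ≤ 0 := by
    intro t
    have key := key_nonneg m hm H hsa hdd hq (u t)
    have e : G t = -(q * ∑ x, m x * (Real.sign (u t x) * |u t x| ^ (q - 1)) * H.mulVec (u t) x) := by
      rw [hG, Finset.mul_sum, ← Finset.sum_neg_distrib]
      refine Finset.sum_congr rfl fun x _ => ?_
      ring
    rw [e, neg_nonpos]
    exact mul_nonneg (by linarith) key
  apply antitoneOn_of_deriv_nonpos (convex_Ici 0)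
  · exact fun t _ => (hF t).continuousAt.continuousWithinAt
  · exact fun t _ => (hF t).differentiableAt.differentiableWithinAt
  · intro t _
    rw [(hF t).deriv]
    exact hGle t

/-- If a selfadjoint operator `H` on `ℓ²(X,m)` is diagonally dominant,
then for every `p ∈ [1,∞)` the map `t ↦ ‖e^{-tH} f‖_p` is nonincreasing on `[0,∞)`,
where `‖f‖_p^p = ∑_x m(x) |f(x)|^p`. -/
theorem stmt_2 {X : Type*} [Fintype X] [DecidableEq X] [Nonempty X]
    (m : X → ℝ) (hm : ∀ x, 0 < m x)
    (H : Matrix X X ℝ)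
    (hsa : ∀ x y, m x * H x y = m y * H y x)
    (hdd : ∀ x, ∑ y ∈ Finset.univ.erase x, |H x y| ≤ H x x)
    (p : ℝ) (hp : 1 ≤ p) (f : X → ℝ) :
    AntitoneOn (fun t : ℝ =>
        (∑ x, m x * |(NormedSpace.exp (-(t • H))).mulVec f x| ^ p) ^ (1 / p))
      (Set.Ici (0 : ℝ)) := by
  intro s hs t ht hst
  set u : ℝ → X → ℝ := fun r => (NormedSpace.exp (-(r • H))).mulVec f with hu
  have hsum : ∑ x, m x * |u t x| ^ p ≤ ∑ x, m x * |u s x| ^ p := by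
    rcases eq_or_lt_of_le hp with h1 | h1
    · -- p = 1 : take the limit q → 1⁺ of the case q > 1
      subst h1
      have hcore : ∀ q ∈ Set.Ioi (1 : ℝ),
          ∑ x, m x * |u t x| ^ q ≤ ∑ x, m x * |u s x| ^ q := fun q hq =>
        core_antitone m hm H hsa hdd hq f hs ht hst
      have hlim : ∀ r : ℝ, Filter.Tendsto (fun q : ℝ => ∑ x, m x * |u r x| ^ q)
          (nhdsWithin 1 (Set.Ioi 1)) (nhds (∑ x, m x * |u r x| ^ (1:ℝ))) := by
        intro r
        apply tendsto_finset_sum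
        intro x _
        rcases eq_or_ne (|u r x|) 0 with h0 | h0
        · have heq : ∀ q ∈ Set.Ioi (1:ℝ), (0:ℝ) = m x * |u r x| ^ q := by
            intro q hq
            rw [h0, Real.zero_rpow (lt_trans zero_lt_one hq).ne', mul_zero]
          have hval : m x * |u r x| ^ (1:ℝ) = 0 := by
            rw [h0, Real.rpow_one, mul_zero]
          rw [hval]
          exact Filter.Tendsto.congr' (eventually_nhdsWithin_of_forall heq)
            tendsto_const_nhds
        · have hc : ContinuousAt (fun q : ℝ => |u r x| ^ q) 1 :=
            Real.continuousAt_const_rpow h0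
          exact ((hc.tendsto.mono_left nhdsWithin_le_nhds).const_mul (m x))
      exact le_of_tendsto_of_tendsto (hlim t) (hlim s)
        (eventually_nhdsWithin_of_forall hcore)
    · exact core_antitone m hm H hsa hdd h1 f hs ht hst
  have h1 : (0:ℝ) ≤ ∑ x, m x * |u t x| ^ p :=
    Finset.sum_nonneg fun x _ => mul_nonneg (hm x).le (Real.rpow_nonneg (abs_nonneg _) _)
  exact Real.rpow_le_rpow h1 hsum (by positivity)
end

section
/- Let X be a finite set with weight m, H a selfadjoint operator on ℓ²(X,m), and ω : X → (0,∞). Then H is diagonally dominant with respect to ω if and only if H satisfies the weighted maximum principle: Hf(x) ≥ 0 whenever f(x)/ω(x) = max_y |f(y)|/ω(y). -/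
/-- `H` is diagonally dominant with respect to `ω` iff `H` satisfies the
weighted maximum principle: `Hf(x) ≥ 0` whenever `f(x)/ω(x) = max_y |f(y)|/ω(y)`. -/
theorem stmt_5 {X : Type*} [Fintype X] [DecidableEq X] [Nonempty X]
    (m ω : X → ℝ) (hm : ∀ x, 0 < m x) (hω : ∀ x, 0 < ω x)
    (H : Matrix X X ℝ)
    (hsa : ∀ x y, m x * H x y = m y * H y x) :
    (∀ x, ∑ y ∈ Finset.univ.erase x, ω y * |H x y| ≤ ω x * H x x) ↔
      (∀ f : X → ℝ, ∀ x, f x / ω x = (⨆ y, |f y| / ω y) → 0 ≤ H.mulVec f x) := by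
  constructor
  · intro hdd f x hx
    set M : ℝ := ⨆ y, |f y| / ω y with hMdef
    have hbdd : BddAbove (Set.range fun y => |f y| / ω y) := Set.Finite.bddAbove (Set.finite_range _)
    have hle : ∀ y, |f y| / ω y ≤ M := fun y => le_ciSup hbdd y
    have hMnn : 0 ≤ M := le_trans (div_nonneg (abs_nonneg _) (hω x).le) (hle x)
    have hfy : ∀ y, |f y| ≤ M * ω y := fun y => by
      have := hle y
      rw [div_le_iff₀ (hω y)] at this
      linarith [this]
    have hfx : f x = M * ω x := by
      rw [div_eq_iff (hω x).ne'] at hx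
      linarith [hx]
    have hsum : H.mulVec f x = H x x * f x + ∑ y ∈ Finset.univ.erase x, H x y * f y := by
      rw [Matrix.mulVec, dotProduct, ← Finset.add_sum_erase _ _ (Finset.mem_univ x)]
    rw [hsum, hfx]
    have hterm : ∀ y ∈ Finset.univ.erase x, -(M * (ω y * |H x y|)) ≤ H x y * f y := by
      intro y _
      have h1 : |H x y * f y| ≤ |H x y| * (M * ω y) := by
        rw [abs_mul]
        exact mul_le_mul_of_nonneg_left (hfy y) (abs_nonneg _)
      have := neg_abs_le (H x y * f y)
      nlinarith [this, h1]
    have h2 : ∑ y ∈ Finset.univ.erase x, -(M * (ω y * |H x y|)) ≤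
        ∑ y ∈ Finset.univ.erase x, H x y * f y := Finset.sum_le_sum hterm
    rw [Finset.sum_neg_distrib, ← Finset.mul_sum] at h2
    have h3 := hdd x
    nlinarith [h2, h3, hMnn]
  · intro hmp x
    classical
    set f : X → ℝ := fun y => if y = x then ω x else -(ω y * Real.sign (H x y)) with hf
    have hfx : f x = ω x := by simp [hf]
    have habs : ∀ y, |f y| / ω y ≤ 1 := by
      intro y
      by_cases hy : y = x
      · subst hy; rw [hfx, abs_of_pos (hω y), div_self (hω y).ne']
      · have : |f y| = ω y * |Real.sign (H x y)| := by
          simp [hf, hy, abs_mul, abs_of_pos (hω y)]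
        rw [this]
        have hs : |Real.sign (H x y)| ≤ 1 := by
          rcases Real.sign_apply_eq (H x y) with h | h | h <;> simp [h]
        rw [div_le_one (hω y)]
        nlinarith [hω y, hs, abs_nonneg (Real.sign (H x y))]
    have hsup : (⨆ y, |f y| / ω y) = 1 := by
      apply le_antisymm
      · exact ciSup_le habs
      · have hbdd : BddAbove (Set.range fun y => |f y| / ω y) :=
          Set.Finite.bddAbove (Set.finite_range _)
        have := le_ciSup hbdd x
        rw [hfx, abs_of_pos (hω x), div_self (hω x).ne'] at this
        exact this
    have h0 := hmp f x (by rw [hfx, div_self (hω x).ne', hsup])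
    have hsum : H.mulVec f x = H x x * ω x + ∑ y ∈ Finset.univ.erase x, H x y * f y := by
      rw [Matrix.mulVec, dotProduct, ← Finset.add_sum_erase _ _ (Finset.mem_univ x), hfx]
    have hterm : ∀ y ∈ Finset.univ.erase x, H x y * f y = -(ω y * |H x y|) := by
      intro y hy
      have hy' : y ≠ x := Finset.ne_of_mem_erase hy
      have : H x y * Real.sign (H x y) = |H x y| := by
        rcases lt_trichotomy (H x y) 0 with h | h | h
        · rw [Real.sign_of_neg h, abs_of_neg h]; ring
        · simp [h]
        · rw [Real.sign_of_pos h, abs_of_pos h]; ring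
      simp only [hf, if_neg hy']
      rw [show H x y * -(ω y * Real.sign (H x y)) =
        -(ω y * (H x y * Real.sign (H x y))) by ring, this]
    rw [hsum, Finset.sum_congr rfl hterm, Finset.sum_neg_distrib] at h0
    linarith [h0]
end

section
/- Let X be a finite set with weight m, H a selfadjoint operator on ℓ²(X,m), and R ∈ ℝ. Define F(x) := H x(x) − Σ_{y≠x} |H y(x)|. Then F(x) ≥ R for all x ∈ X if and only if ‖e^{-tH} f‖_∞ ≤ e^{-Rt} ‖f‖_∞ for all t ≥ 0 and all f : X → ℝ. -/
open NormedSpace Filter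

namespace Stmt6Aux

attribute [local instance] Matrix.linftyOpNormedRing Matrix.linftyOpNormedAlgebra

variable {X : Type*} [Fintype X] [DecidableEq X] [Nonempty X]

lemma row_le_norm (A : Matrix X X ℝ) (x : X) : ∑ y, |A x y| ≤ ‖A‖ := by
  rw [Matrix.linfty_opNorm_def]
  have h := Finset.le_sup (f := fun i => ∑ j, ‖A i j‖₊) (Finset.mem_univ x)
  have := NNReal.coe_le_coe.mpr h
  simpa [NNReal.coe_sum, Real.norm_eq_abs] using this

lemma norm_le_rows {A : Matrix X X ℝ} {c : ℝ} (hc : 0 ≤ c)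
    (h : ∀ x, ∑ y, |A x y| ≤ c) : ‖A‖ ≤ c := by
  rw [Matrix.linfty_opNorm_def]
  have : (Finset.univ.sup fun i : X => ∑ j, ‖A i j‖₊) ≤ (⟨c, hc⟩ : NNReal) := by
    refine Finset.sup_le fun x _ => ?_
    refine NNReal.coe_le_coe.mp (show _ ≤ c from ?_)
    simpa [NNReal.coe_sum, Real.norm_eq_abs] using h x
  exact_mod_cast this

lemma my_norm_exp_le (A : Matrix X X ℝ) : ‖exp A‖ ≤ Real.exp ‖A‖ := by
  have hexp : exp A = ∑' n : ℕ, ((n.factorial : ℝ))⁻¹ • A ^ n := by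
    rw [exp_eq_tsum (𝕂 := ℝ)]
  have hs : Summable fun n : ℕ => ‖((n.factorial : ℝ))⁻¹ • A ^ n‖ :=
    norm_expSeries_summable' A
  rw [hexp]
  refine (norm_tsum_le_tsum_norm hs).trans ?_
  have hR : Real.exp ‖A‖ = ∑' n : ℕ, ‖A‖ ^ n / (n.factorial : ℝ) := by
    rw [Real.exp_eq_exp_ℝ, exp_eq_tsum_div]
  rw [hR]
  refine Summable.tsum_le_tsum (fun n => ?_) hs (Real.summable_pow_div_factorial ‖A‖)
  rw [norm_smul, norm_inv, Real.norm_natCast, div_eq_inv_mul]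
  gcongr
  rcases Nat.eq_zero_or_pos n with h | h
  · subst h; simp
  · exact norm_pow_le' A h

lemma exp_contraction {A : Matrix X X ℝ}
    (hA : ∀ x, ∑ y ∈ Finset.univ.erase x, |A x y| ≤ A x x) {t : ℝ} (ht : 0 ≤ t) :
    ‖exp (t • (-A))‖ ≤ 1 := by
  set c := ‖A‖ with hc
  have hc0 : 0 ≤ c := norm_nonneg A
  set M : Matrix X X ℝ := c • 1 - A with hM
  have hsplit : t • (-A) = t • M + (-(t * c)) • (1 : Matrix X X ℝ) := by
    ext x y
    simp [hM, Matrix.add_apply, Matrix.sub_apply, Matrix.smul_apply, Matrix.one_apply,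
      Matrix.neg_apply, smul_eq_mul]
    ring_nf
    by_cases h : x = y <;> simp [h] <;> ring
  have hcomm : Commute (t • M) ((-(t * c)) • (1 : Matrix X X ℝ)) :=
    (Commute.one_right (t • M)).smul_right _
  rw [hsplit, Matrix.exp_add_of_commute _ _ hcomm]
  have h1 : exp ((-(t * c)) • (1 : Matrix X X ℝ)) = Real.exp (-(t * c)) • 1 := by
    rw [← Algebra.algebraMap_eq_smul_one]
    erw [← algebraMap_exp_comm]
    rw [← Real.exp_eq_exp_ℝ,
      Algebra.algebraMap_eq_smul_one]
  rw [h1]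
  have hMn : ‖M‖ ≤ c := by
    refine norm_le_rows hc0 fun x => ?_
    have hAxx0 : 0 ≤ A x x :=
      le_trans (Finset.sum_nonneg fun y _ => abs_nonneg _) (hA x)
    have hAxxc : A x x ≤ c := by
      calc A x x ≤ |A x x| := le_abs_self _
        _ ≤ ∑ y, |A x y| := Finset.single_le_sum (f := fun y => |A x y|) (fun y _ => abs_nonneg _) (Finset.mem_univ x)
        _ ≤ c := row_le_norm A x
    have hsum : ∑ y, |M x y| = |c - A x x| + ∑ y ∈ Finset.univ.erase x, |A x y| := by
      rw [← Finset.add_sum_erase _ _ (Finset.mem_univ x)]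
      congr 1
      · simp [hM, Matrix.sub_apply, Matrix.smul_apply, Matrix.one_apply, smul_eq_mul]
      · refine Finset.sum_congr rfl fun y hy => ?_
        have : x ≠ y := fun h => (Finset.mem_erase.mp hy).1 h.symm
        simp [hM, Matrix.sub_apply, Matrix.smul_apply, Matrix.one_apply, this, smul_eq_mul]
    rw [hsum, abs_of_nonneg (by linarith)]
    have := hA x
    linarith
  have e1 : ‖exp (t • M) * (Real.exp (-(t * c)) • (1 : Matrix X X ℝ))‖
      ≤ ‖exp (t • M)‖ * ‖Real.exp (-(t * c)) • (1 : Matrix X X ℝ)‖ := norm_mul_le _ _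
  have e2 : ‖Real.exp (-(t * c)) • (1 : Matrix X X ℝ)‖ = Real.exp (-(t * c)) := by
    rw [norm_smul, norm_one, mul_one, Real.norm_eq_abs, abs_of_nonneg (Real.exp_pos _).le]
  have e3 : ‖exp (t • M)‖ ≤ Real.exp (t * c) := by
    refine (my_norm_exp_le _).trans (Real.exp_le_exp.mpr ?_)
    rw [norm_smul, Real.norm_eq_abs, abs_of_nonneg ht]
    exact mul_le_mul_of_nonneg_left hMn ht
  refine le_trans e1 ?_
  rw [e2]
  refine le_trans (mul_le_mul_of_nonneg_right e3 (Real.exp_pos _).le) ?_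
  rw [← Real.exp_add]
  simp

lemma hasDerivAt_entry (B : Matrix X X ℝ) (f : X → ℝ) (x : X) :
    HasDerivAt (fun t : ℝ => ((exp (t • B)).mulVec f) x) ((B.mulVec f) x) 0 := by
  have hE : HasDerivAt (fun u : ℝ => exp (u • B)) (exp ((0:ℝ) • B) * B) 0 :=
    hasDerivAt_exp_smul_const B (0:ℝ)
  rw [zero_smul, exp_zero, one_mul] at hE
  let φ : Matrix X X ℝ →ₗ[ℝ] ℝ :=
    { toFun := fun M => (M.mulVec f) x
      map_add' := fun M N => by simp [Matrix.add_mulVec, Pi.add_apply]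
      map_smul' := fun c M => by simp [Matrix.smul_mulVec, Pi.smul_apply] }
  let L := LinearMap.toContinuousLinearMap φ
  have h := L.hasFDerivAt.comp_hasDerivAt 0 hE
  exact h

end Stmt6Aux

/-- For a selfadjoint `H` on `ℓ²(X,m)` with Forman curvature
`F(x) = H x x − ∑_{y≠x} |H y x|`, one has `F ≥ R` iff
`‖e^{-tH} f‖_∞ ≤ e^{-Rt} ‖f‖_∞` for all `t ≥ 0` and all `f`. -/
theorem stmt_6 {X : Type*} [Fintype X] [DecidableEq X] [Nonempty X]
    (m : X → ℝ) (hm : ∀ x, 0 < m x)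
    (H : Matrix X X ℝ)
    (hsa : ∀ x y, m x * H x y = m y * H y x)
    (R : ℝ) :
    (∀ x, R ≤ H x x - ∑ y ∈ Finset.univ.erase x, |H x y|) ↔
      (∀ t : ℝ, 0 ≤ t → ∀ f : X → ℝ,
        ‖(NormedSpace.exp (-(t • H))).mulVec f‖ ≤ Real.exp (-R * t) * ‖f‖) := by
  letI : NormedRing (Matrix X X ℝ) := Matrix.linftyOpNormedRing
  letI : NormedAlgebra ℝ (Matrix X X ℝ) := Matrix.linftyOpNormedAlgebra
  constructor
  · -- forward
    intro hF t ht f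
    set A : Matrix X X ℝ := H - R • 1 with hA
    have hAdom : ∀ x, ∑ y ∈ Finset.univ.erase x, |A x y| ≤ A x x := by
      intro x
      have h1 : ∀ y ∈ Finset.univ.erase x, |A x y| = |H x y| := by
        intro y hy
        have hxy : x ≠ y := fun h => (Finset.mem_erase.mp hy).1 h.symm
        simp [hA, Matrix.sub_apply, Matrix.smul_apply, Matrix.one_apply, hxy, smul_eq_mul]
      rw [Finset.sum_congr rfl h1]
      have : A x x = H x x - R := by
        simp [hA, Matrix.sub_apply, Matrix.smul_apply, Matrix.one_apply, smul_eq_mul]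
      rw [this]
      have := hF x
      linarith
    have hsplit : -(t • H) = t • (-A) + (-(R * t)) • (1 : Matrix X X ℝ) := by
      ext x y
      simp [hA, Matrix.add_apply, Matrix.sub_apply, Matrix.smul_apply, Matrix.one_apply,
        Matrix.neg_apply, smul_eq_mul]
      by_cases h : x = y <;> simp [h] <;> ring
    have hcomm : Commute (t • (-A)) ((-(R * t)) • (1 : Matrix X X ℝ)) :=
      (Commute.one_right (t • (-A))).smul_right _
    have hexp : NormedSpace.exp (-(t • H))
        = Real.exp (-(R * t)) • NormedSpace.exp (t • (-A)) := by
      rw [hsplit, Matrix.exp_add_of_commute _ _ hcomm]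
      have h1 : NormedSpace.exp ((-(R * t)) • (1 : Matrix X X ℝ))
          = Real.exp (-(R * t)) • 1 := by
        rw [← Algebra.algebraMap_eq_smul_one]
        erw [← NormedSpace.algebraMap_exp_comm]
        rw [← Real.exp_eq_exp_ℝ, Algebra.algebraMap_eq_smul_one]
      rw [h1, mul_smul_comm, mul_one]
    calc ‖(NormedSpace.exp (-(t • H))).mulVec f‖
        ≤ ‖NormedSpace.exp (-(t • H))‖ * ‖f‖ := Matrix.linfty_opNorm_mulVec _ _
      _ ≤ Real.exp (-R * t) * ‖f‖ := by
          refine mul_le_mul_of_nonneg_right ?_ (norm_nonneg f)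
          rw [hexp, norm_smul, Real.norm_eq_abs, abs_of_nonneg (Real.exp_pos _).le,
            neg_mul]
          calc Real.exp (-(R * t)) * ‖NormedSpace.exp (t • (-A))‖
              ≤ Real.exp (-(R * t)) * 1 :=
                mul_le_mul_of_nonneg_left (Stmt6Aux.exp_contraction hAdom ht) (Real.exp_pos _).le
            _ = Real.exp (-(R * t)) := mul_one _
  · -- reverse
    intro hC x
    classical
    set f : X → ℝ := fun y => if y = x then 1 else if 0 ≤ H x y then -1 else 1 with hf
    have hfnorm : ‖f‖ ≤ 1 := by
      rw [pi_norm_le_iff_of_nonneg zero_le_one]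
      intro y
      by_cases h : y = x <;> by_cases h2 : 0 ≤ H x y <;>
        simp [hf, h, h2, Real.norm_eq_abs]
    have hHf : (H.mulVec f) x = H x x - ∑ y ∈ Finset.univ.erase x, |H x y| := by
      rw [Matrix.mulVec, dotProduct]
      rw [← Finset.add_sum_erase _ (fun y => H x y * f y) (Finset.mem_univ x)]
      have h1 : H x x * f x = H x x := by simp [hf]
      have h2 : ∀ y ∈ Finset.univ.erase x, H x y * f y = -|H x y| := by
        intro y hy
        have hyx : y ≠ x := (Finset.mem_erase.mp hy).1
        rcases le_or_gt 0 (H x y) with h | h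
        · simp [hf, hyx, h, abs_of_nonneg h]
        · simp [hf, hyx, not_le.mpr h, abs_of_neg h]
      rw [h1, Finset.sum_congr rfl h2, Finset.sum_neg_distrib]
      ring
    -- the function g and ψ
    set g : ℝ → ℝ := fun t => ((NormedSpace.exp (-(t • H))).mulVec f) x with hg
    have hg0 : g 0 = 1 := by
      simp [hg, hf, NormedSpace.exp_zero, Matrix.one_mulVec]
    have hgle : ∀ t : ℝ, 0 ≤ t → g t ≤ Real.exp (-R * t) := by
      intro t ht
      calc g t ≤ |g t| := le_abs_self _
        _ ≤ ‖(NormedSpace.exp (-(t • H))).mulVec f‖ := by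
            rw [← Real.norm_eq_abs]
            exact norm_le_pi_norm ((NormedSpace.exp (-(t • H))).mulVec f) x
        _ ≤ Real.exp (-R * t) * ‖f‖ := hC t ht f
        _ ≤ Real.exp (-R * t) * 1 :=
            mul_le_mul_of_nonneg_left hfnorm (Real.exp_pos _).le
        _ = Real.exp (-R * t) := mul_one _
    -- derivative of g at 0
    have hderivg : HasDerivAt g (((-H).mulVec f) x) 0 := by
      have h := Stmt6Aux.hasDerivAt_entry (-H) f x
      simpa [smul_neg] using h
    have hderivexp : HasDerivAt (fun t : ℝ => Real.exp (-R * t)) (-R) 0 := by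
      have hinner : HasDerivAt (fun t : ℝ => -R * t) (-R) 0 := by
        have h0 := (hasDerivAt_id (0:ℝ)).const_mul (-R)
        rwa [mul_one] at h0
      have h := (Real.hasDerivAt_exp (-R * 0)).comp 0 hinner
      rwa [mul_zero, Real.exp_zero, one_mul] at h
    have hderivψ : HasDerivAt (fun t => g t - Real.exp (-R * t))
        ((((-H).mulVec f) x) - (-R)) 0 := hderivg.sub hderivexp
    have hψle : ∀ t ≥ (0:ℝ), g t - Real.exp (-R * t) ≤ 0 := fun t ht =>
      sub_nonpos.mpr (hgle t ht)
    have hψ0 : g 0 - Real.exp (-R * 0) = 0 := by simp [hg0]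
    -- derivative sign
    have hd : (((-H).mulVec f) x) - (-R) ≤ 0 := by
      set ψ : ℝ → ℝ := fun t => g t - Real.exp (-R * t) with hψ
      have hs : Filter.Tendsto (slope ψ 0) (nhdsWithin 0 {(0:ℝ)}ᶜ)
          (nhds ((((-H).mulVec f) x) - (-R))) :=
        hasDerivAt_iff_tendsto_slope.mp hderivψ
      have hs' : Filter.Tendsto (slope ψ 0) (nhdsWithin 0 (Set.Ioi 0))
          (nhds ((((-H).mulVec f) x) - (-R))) :=
        hs.mono_left (nhdsWithin_mono 0 fun t ht => ne_of_gt ht)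
      refine le_of_tendsto hs' ?_
      refine Filter.eventually_of_mem self_mem_nhdsWithin fun t ht => ?_
      have hts : slope ψ 0 t = ψ t / t := by
        rw [slope_def_field]
        simp [hψ, hg0]
      rw [hts]
      exact div_nonpos_of_nonpos_of_nonneg (hψle t (le_of_lt ht)) (le_of_lt ht)
    have hneg : ((-H).mulVec f) x = -((H.mulVec f) x) := by
      rw [Matrix.neg_mulVec]
      simp
    rw [hneg] at hd
    rw [← hHf]
    linarith
end

section
/- Let X be a finite set with weight m, H selfadjoint on ℓ²(X,m) and diagonally dominant. For p ∈ (1,∞), g : X → ℝ, and φ(s) := |s|^{p-1} sgn(s), one has ⟨Hg, φ(g)⟩ ≥ 0, where ⟨f,h⟩ = Σ_x f(x)h(x)m(x). -/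
private lemma phi_mono {p : ℝ} (hp : 1 < p) :
    Monotone fun s : ℝ => |s| ^ (p - 1) * Real.sign s := by
  have hq : (0 : ℝ) ≤ p - 1 := by linarith
  intro s t hst
  dsimp only
  rcases lt_trichotomy s 0 with hs | hs | hs
  · rcases lt_trichotomy t 0 with ht | ht | ht
    · rw [Real.sign_of_neg hs, Real.sign_of_neg ht, abs_of_neg hs, abs_of_neg ht]
      have h := Real.rpow_le_rpow (by linarith : (0:ℝ) ≤ -t) (by linarith : -t ≤ -s) hq
      nlinarith [h]
    · subst ht
      simp only [Real.sign_of_neg hs, Real.sign_zero, mul_zero]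
      nlinarith [Real.rpow_nonneg (abs_nonneg s) (p - 1)]
    · rw [Real.sign_of_neg hs, Real.sign_of_pos ht]
      nlinarith [Real.rpow_nonneg (abs_nonneg s) (p - 1),
        Real.rpow_nonneg (abs_nonneg t) (p - 1)]
  · subst hs
    simp only [Real.sign_zero, mul_zero]
    rcases lt_or_eq_of_le hst with ht | ht
    · rw [Real.sign_of_pos ht]
      nlinarith [Real.rpow_nonneg (abs_nonneg t) (p - 1)]
    · subst ht; simp
  · have ht : 0 < t := lt_of_lt_of_le hs hst
    rw [Real.sign_of_pos hs, Real.sign_of_pos ht, abs_of_pos hs, abs_of_pos ht]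
    have h := Real.rpow_le_rpow (le_of_lt hs) hst hq
    nlinarith [h]

private lemma sum_erase_comm {X : Type*} [Fintype X] [DecidableEq X] (F : X → X → ℝ) :
    ∑ x, ∑ y ∈ Finset.univ.erase x, F x y = ∑ x, ∑ y ∈ Finset.univ.erase x, F y x := by
  have h : ∀ G : X → X → ℝ, (∑ x, ∑ y ∈ Finset.univ.erase x, G x y)
      = ∑ x, ∑ y, if y ≠ x then G x y else 0 := by
    intro G
    refine Finset.sum_congr rfl fun x _ => ?_
    rw [← Finset.filter_ne' Finset.univ x, Finset.sum_filter]
  rw [h, h, Finset.sum_comm]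
  refine Finset.sum_congr rfl fun x _ => Finset.sum_congr rfl fun y _ => ?_
  exact if_congr ne_comm rfl rfl

/-- For a selfadjoint diagonally dominant `H` on `ℓ²(X,m)`, `p ∈ (1,∞)`
and `φ(s) = |s|^{p-1} sgn(s)`, one has `⟨Hg, φ(g)⟩ ≥ 0`. -/
theorem stmt_9 {X : Type*} [Fintype X] [DecidableEq X]
    (m : X → ℝ) (hm : ∀ x, 0 < m x)
    (H : Matrix X X ℝ)
    (hsa : ∀ x y, m x * H x y = m y * H y x)
    (hdd : ∀ x, ∑ y ∈ Finset.univ.erase x, |H x y| ≤ H x x)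
    (p : ℝ) (hp : 1 < p) (g : X → ℝ) :
    0 ≤ ∑ x, H.mulVec g x * (|g x| ^ (p - 1) * Real.sign (g x)) * m x := by
  set φ : ℝ → ℝ := fun s => |s| ^ (p - 1) * Real.sign s with hφdef
  have hmono : Monotone φ := phi_mono hp
  have hodd : ∀ s, φ (-s) = -φ s := by
    intro s; simp only [hφdef, abs_neg, Real.sign_neg, mul_neg]
  have hpair2 : ∀ u v : ℝ, 0 ≤ (u - v) * (φ u - φ v) := by
    intro u v
    rcases le_total u v with h | h
    · have := hmono h; nlinarith
    · have := hmono h; nlinarith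
  have hpair1 : ∀ u v : ℝ, 0 ≤ (u + v) * (φ u + φ v) := by
    intro u v
    have := hpair2 u (-v)
    rw [hodd] at this
    nlinarith
  have hself : ∀ s : ℝ, 0 ≤ s * φ s := by
    intro s; nlinarith [hpair1 s s]
  set a : X → X → ℝ := fun x y => m x * H x y with hadef
  have hasymm : ∀ x y, a x y = a y x := hsa
  show 0 ≤ ∑ x, H.mulVec g x * φ (g x) * m x
  have hx1 : ∀ x, H.mulVec g x * φ (g x) * m x = ∑ y, a x y * (g y * φ (g x)) := by
    intro x
    rw [Matrix.mulVec, dotProduct, Finset.sum_mul, Finset.sum_mul]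
    exact Finset.sum_congr rfl fun y _ => by simp only [hadef]; ring
  have S_eq : (∑ x, H.mulVec g x * φ (g x) * m x)
      = (∑ x, a x x * (g x * φ (g x)))
        + ∑ x, ∑ y ∈ Finset.univ.erase x, a x y * (g y * φ (g x)) := by
    rw [← Finset.sum_add_distrib]
    refine Finset.sum_congr rfl fun x _ => ?_
    rw [hx1 x, ← Finset.sum_erase_add Finset.univ _ (Finset.mem_univ x), add_comm]
  have hdiagbd : ∀ x, (∑ y ∈ Finset.univ.erase x, |a x y|) * (g x * φ (g x))
      ≤ a x x * (g x * φ (g x)) := by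
    intro x
    refine mul_le_mul_of_nonneg_right ?_ (hself (g x))
    have h1 : ∑ y ∈ Finset.univ.erase x, |a x y| = m x * ∑ y ∈ Finset.univ.erase x, |H x y| := by
      rw [Finset.mul_sum]
      exact Finset.sum_congr rfl fun y _ => by
        simp only [hadef]; rw [abs_mul, abs_of_pos (hm x)]
    rw [h1, hadef]
    exact mul_le_mul_of_nonneg_left (hdd x) (hm x).le
  -- swap identities
  have hsw1 : ∑ x, ∑ y ∈ Finset.univ.erase x, |a x y| * (g y * φ (g y))
      = ∑ x, ∑ y ∈ Finset.univ.erase x, |a x y| * (g x * φ (g x)) := by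
    rw [sum_erase_comm (fun x y => |a x y| * (g y * φ (g y)))]
    exact Finset.sum_congr rfl fun x _ => Finset.sum_congr rfl fun y _ => by
      rw [hasymm x y]
  have hsw2 : ∑ x, ∑ y ∈ Finset.univ.erase x, a x y * (g x * φ (g y))
      = ∑ x, ∑ y ∈ Finset.univ.erase x, a x y * (g y * φ (g x)) := by
    rw [sum_erase_comm (fun x y => a x y * (g x * φ (g y)))]
    exact Finset.sum_congr rfl fun x _ => Finset.sum_congr rfl fun y _ => by
      rw [hasymm x y]
  have key : ∀ x y, 0 ≤ |a x y| * (g x * φ (g x)) + |a x y| * (g y * φ (g y))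
      + a x y * (g y * φ (g x)) + a x y * (g x * φ (g y)) := by
    intro x y
    rcases abs_cases (a x y) with ⟨h1, h2⟩ | ⟨h1, h2⟩
    · rw [h1]
      nlinarith [mul_nonneg h2 (hpair1 (g x) (g y))]
    · rw [h1]
      nlinarith [mul_nonneg (neg_nonneg.2 h2.le) (hpair2 (g x) (g y))]
  have hT : 0 ≤ (∑ x, ∑ y ∈ Finset.univ.erase x, |a x y| * (g x * φ (g x)))
      + ∑ x, ∑ y ∈ Finset.univ.erase x, a x y * (g y * φ (g x)) := by
    have hexp : (∑ x, ∑ y ∈ Finset.univ.erase x,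
        (|a x y| * (g x * φ (g x)) + |a x y| * (g y * φ (g y))
          + a x y * (g y * φ (g x)) + a x y * (g x * φ (g y))))
        = 2 * ((∑ x, ∑ y ∈ Finset.univ.erase x, |a x y| * (g x * φ (g x)))
          + ∑ x, ∑ y ∈ Finset.univ.erase x, a x y * (g y * φ (g x))) := by
      simp only [Finset.sum_add_distrib]
      rw [hsw1, hsw2]; ring
    have hnn : 0 ≤ ∑ x, ∑ y ∈ Finset.univ.erase x,
        (|a x y| * (g x * φ (g x)) + |a x y| * (g y * φ (g y))
          + a x y * (g y * φ (g x)) + a x y * (g x * φ (g y))) :=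
      Finset.sum_nonneg fun x _ => Finset.sum_nonneg fun y _ => key x y
    linarith [hexp ▸ hnn]
  rw [S_eq]
  have hA : (∑ x, ∑ y ∈ Finset.univ.erase x, |a x y| * (g x * φ (g x)))
      ≤ ∑ x, a x x * (g x * φ (g x)) := by
    refine Finset.sum_le_sum fun x _ => ?_
    rw [← Finset.sum_mul]
    exact hdiagbd x
  linarith
end

section
/- Let (X, δ, m) be a cell complex with Hodge Laplacian H = δδ* + δ*δ, and define the Forman curvature F(x) := H x(x) − Σ_{y≠x} |H y(x)|. Then for every cell x, F(x) ≤ κ(x), where κ(x) := inf { δδ*δf(x) : f ∈ C(X), δf(x) = 1, |δf(y)| ≤ 1 for all y } is the Ollivier curvature (with inf over a nonempty feasible set). -/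
/-- For a cell complex with Hodge Laplacian `H = δδ* + δ*δ` and Forman
curvature `F(x) = H x(x) − ∑_{y≠x}|H y(x)|`, the Forman curvature is bounded above by
the Ollivier curvature `κ(x) = inf { δδ*δf(x) : δf(x) = 1, |δf| ≤ 1 }` (the infimum
being over a nonempty feasible set). -/
theorem stmt_13 {X : Type*} [Fintype X] [DecidableEq X]
    (dim : X → ℕ) (δ : X → X → ℝ) (m : X → ℝ) (hm : ∀ x, 0 < m x)
    (hval : ∀ v z, δ v z = -1 ∨ δ v z = 0 ∨ δ v z = 1)
    (hdim : ∀ v z, δ v z ≠ 0 → dim z = dim v + 1)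
    (hsq : ∀ v z, ∑ x, δ v x * δ x z = 0)
    (x : X) :
    let D : Matrix X X ℝ := Matrix.of fun z v => δ v z
    let Dstar : Matrix X X ℝ := Matrix.of fun a z => m z / m a * δ a z
    let H : Matrix X X ℝ := D * Dstar + Dstar * D
    (∃ f : X → ℝ, D.mulVec f x = 1 ∧ ∀ y, |D.mulVec f y| ≤ 1) →
    H x x - (∑ y ∈ Finset.univ.erase x, |H x y|) ≤
      sInf {c : ℝ | ∃ f : X → ℝ, D.mulVec f x = 1 ∧ (∀ y, |D.mulVec f y| ≤ 1) ∧
        c = D.mulVec (Dstar.mulVec (D.mulVec f)) x} := by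
  intro D Dstar H hfe
  have hDD : D * D = 0 := by
    ext z v
    simp only [Matrix.mul_apply, Matrix.zero_apply, D, Matrix.of_apply]
    calc ∑ a, δ a z * δ v a = ∑ a, δ v a * δ a z := by
          exact Finset.sum_congr rfl fun a _ => mul_comm _ _
      _ = 0 := hsq v z
  apply le_csInf
  · obtain ⟨f, hf1, hf2⟩ := hfe
    exact ⟨_, f, hf1, hf2, rfl⟩
  · rintro c ⟨f, hf1, hf2, rfl⟩
    set g := D.mulVec f with hg
    have hDg : D.mulVec g = 0 := by
      rw [hg, Matrix.mulVec_mulVec, hDD, Matrix.zero_mulVec]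
    have hc : D.mulVec (Dstar.mulVec g) x = H.mulVec g x := by
      have : H.mulVec g = (D * Dstar).mulVec g + (Dstar * D).mulVec g := by
        simp [H, Matrix.add_mulVec]
      rw [this]
      have h2 : (Dstar * D).mulVec g = 0 := by
        rw [Matrix.mulVec_mulVec, Matrix.mul_assoc, hDD, Matrix.mul_zero, Matrix.zero_mulVec]
      rw [h2, ← Matrix.mulVec_mulVec]
      simp
    rw [hc]
    have hexp : H.mulVec g x = H x x * g x + ∑ y ∈ Finset.univ.erase x, H x y * g y := by
      rw [Matrix.mulVec, dotProduct]
      exact (Finset.add_sum_erase _ _ (Finset.mem_univ x)).symm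
    rw [hexp, hf1, mul_one, sub_eq_add_neg]
    gcongr H x x + ?_
    rw [← Finset.sum_neg_distrib]
    apply Finset.sum_le_sum
    intro y _
    calc -|H x y| ≤ -(|H x y| * |g y|) := by
          rw [neg_le_neg_iff]
          nlinarith [abs_nonneg (H x y), hf2 y, abs_nonneg (g y)]
      _ = -|H x y * g y| := by rw [abs_mul]
      _ ≤ H x y * g y := neg_abs_le _
end

section
/- Let (X, δ, m) be a cell complex, x a cell, and suppose h : X → ℝ satisfies h(x) = 1, |h(y)| ≤ 1 for all y, and δx(z)·δh(z) ≤ 0 for all cells z. Then F(x) ≤ δδ*h(x), where F(x) := H x(x) − Σ_{y≠x}|H y(x)| with H = δδ* + δ*δ. -/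
/-- weak LP duality: For a cell complex with Hodge Laplacian
`H = δδ* + δ*δ` and Forman curvature `F(x) = H x(x) − ∑_{y≠x}|H y(x)|`, every `h` with
`h(x) = 1`, `|h| ≤ 1` and `δx(z)·δh(z) ≤ 0` for all `z` satisfies `F(x) ≤ δδ*h(x)`. -/
theorem stmt_14 {X : Type*} [Fintype X] [DecidableEq X]
    (dim : X → ℕ) (δ : X → X → ℝ) (m : X → ℝ) (hm : ∀ x, 0 < m x)
    (hval : ∀ v z, δ v z = -1 ∨ δ v z = 0 ∨ δ v z = 1)
    (hdim : ∀ v z, δ v z ≠ 0 → dim z = dim v + 1)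
    (hsq : ∀ v z, ∑ x, δ v x * δ x z = 0)
    (x : X) (h : X → ℝ)
    (hx : h x = 1) (hbd : ∀ y, |h y| ≤ 1) :
    let D : Matrix X X ℝ := Matrix.of fun z v => δ v z
    let Dstar : Matrix X X ℝ := Matrix.of fun a z => m z / m a * δ a z
    let H : Matrix X X ℝ := D * Dstar + Dstar * D
    (∀ z, δ x z * D.mulVec h z ≤ 0) →
    H x x - (∑ y ∈ Finset.univ.erase x, |H x y|) ≤ D.mulVec (Dstar.mulVec h) x := by
  intro D Dstar H hz
  -- (D* D h)(x) ≤ 0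
  have h2 : Dstar.mulVec (D.mulVec h) x ≤ 0 := by
    show ∑ z, Dstar x z * D.mulVec h z ≤ 0
    apply Finset.sum_nonpos
    intro z _
    have : Dstar x z * D.mulVec h z = (m z / m x) * (δ x z * D.mulVec h z) := by
      show (m z / m x * δ x z) * _ = _
      ring
    rw [this]
    exact mul_nonpos_of_nonneg_of_nonpos
      (div_nonneg (hm z).le (hm x).le) (hz z)
  -- (H h)(x) = (D D* h)(x) + (D* D h)(x)
  have hsplit : H.mulVec h x = D.mulVec (Dstar.mulVec h) x + Dstar.mulVec (D.mulVec h) x := by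
    show (D * Dstar + Dstar * D).mulVec h x = _
    rw [Matrix.add_mulVec, Matrix.mulVec_mulVec, Matrix.mulVec_mulVec]
    rfl
  -- F(x) ≤ (H h)(x)
  have hF : H x x - (∑ y ∈ Finset.univ.erase x, |H x y|) ≤ H.mulVec h x := by
    have : H.mulVec h x = H x x * h x + ∑ y ∈ Finset.univ.erase x, H x y * h y := by
      show ∑ y, H x y * h y = _
      exact (Finset.add_sum_erase _ _ (Finset.mem_univ x)).symm
    rw [this, hx, mul_one]
    have key : ∀ y ∈ Finset.univ.erase x, -|H x y| ≤ H x y * h y := by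
      intro y _
      calc -|H x y| ≤ -|H x y * h y| := by
            rw [neg_le_neg_iff]
            calc |H x y * h y| = |H x y| * |h y| := abs_mul _ _
              _ ≤ |H x y| * 1 := by
                  exact mul_le_mul_of_nonneg_left (hbd y) (abs_nonneg _)
              _ = |H x y| := mul_one _
        _ ≤ H x y * h y := neg_abs_le _
    have := Finset.sum_le_sum key
    rw [Finset.sum_neg_distrib] at this
    linarith
  linarith
end

section
/- Let X be a finite set with weight m : X → (0,∞) and J : C(X) → C(X) linear with matrix entries J y(x). Then the condition 'J x(x)/m(x) ≥ |J y(x)|/m(y) for all x, y' is equivalent to: J f(x) ≥ 0 whenever 2⟨1_x, f⟩ ≥ ‖f‖₁, where ⟨g,f⟩ = Σ_y g(y)f(y)m(y) and ‖f‖₁ = Σ_y m(y)|f(y)|. -/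
/-- For a linear operator `J` on `C(X)`, the condition
`J x(x)/m(x) ≥ |J y(x)|/m(y)` for all `x, y` is equivalent to: `J f(x) ≥ 0` whenever
`2⟨1_x, f⟩ ≥ ‖f‖₁`, i.e. whenever `2 m(x) f(x) ≥ ∑_y m(y)|f(y)|`. -/
theorem stmt_15 {X : Type*} [Fintype X]
    (m : X → ℝ) (hm : ∀ x, 0 < m x)
    (J : Matrix X X ℝ) :
    (∀ x y, |J x y| / m y ≤ J x x / m x) ↔
      (∀ f : X → ℝ, ∀ x, (∑ y, m y * |f y|) ≤ 2 * (m x * f x) → 0 ≤ J.mulVec f x) := by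
  classical
  constructor
  · intro h f x hf
    have hmx := hm x
    have h1 : |J x x| ≤ J x x := (div_le_div_iff_of_pos_right hmx).mp (h x x)
    have hJxx : 0 ≤ J x x := le_trans (abs_nonneg _) h1
    have key : ∀ y ∈ Finset.univ, -(J x x / m x) * (m y * |f y|) +
        (if y = x then J x x * (f x + |f x|) else 0) ≤ J x y * f y := by
      intro y _
      by_cases hyx : y = x
      · subst hyx
        rw [if_pos rfl]
        have e : -(J y y / m y) * (m y * |f y|) = -(J y y * |f y|) := by
          field_simp
        linarith
      · rw [if_neg hyx, add_zero]
        have hb : |J x y| ≤ J x x / m x * m y := (div_le_iff₀ (hm y)).mp (h x y)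
        have h2 := neg_abs_le (J x y * f y)
        rw [abs_mul] at h2
        nlinarith [abs_nonneg (f y)]
    have hsum := Finset.sum_le_sum key
    rw [Finset.sum_add_distrib] at hsum
    rw [Finset.sum_ite_eq' Finset.univ x (fun _ => J x x * (f x + |f x|))] at hsum
    simp only [Finset.mem_univ, if_true] at hsum
    rw [← Finset.mul_sum] at hsum
    have e2 : J x x / m x * (2 * (m x * f x)) = 2 * (J x x * f x) := by
      field_simp
    have e3 : 0 ≤ J x x / m x := div_nonneg hJxx hmx.le
    have e4 := mul_le_mul_of_nonneg_left hf e3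
    have e5 : 0 ≤ J x x * (|f x| - f x) :=
      mul_nonneg hJxx (sub_nonneg.2 (le_abs_self (f x)))
    show 0 ≤ ∑ y, J x y * f y
    nlinarith
  · intro h x y
    by_cases hxy : y = x
    · subst hxy
      set f : X → ℝ := fun z => if z = y then 1 else 0 with hfdef
      have hsum : ∑ z, m z * |f z| = m y := by
        simp [hfdef, apply_ite abs, mul_ite, Finset.sum_ite_eq']
      have hJ : J.mulVec f y = J y y := by
        simp [Matrix.mulVec, dotProduct, hfdef, mul_ite, Finset.sum_ite_eq']
      have h0 : 0 ≤ J y y := by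
        have := h f y (by rw [hsum]; simp [hfdef]; nlinarith [hm y])
        rwa [hJ] at this
      rw [abs_of_nonneg h0]
    · set c : ℝ := if 0 ≤ J x y then -(1 / m y) else 1 / m y with hcdef
      have hcabs : |c| = 1 / m y := by
        rw [hcdef]; split_ifs
        · rw [abs_neg, abs_of_pos (one_div_pos.mpr (hm y))]
        · rw [abs_of_pos (one_div_pos.mpr (hm y))]
      have hcmul : J x y * c = -(|J x y| / m y) := by
        rw [hcdef]; split_ifs with h'
        · rw [abs_of_nonneg h']; ring
        · rw [abs_of_neg (lt_of_not_ge h')]; ring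
      set f : X → ℝ := fun z => if z = x then 1 / m x else if z = y then c else 0 with hfdef
      have hne : ∀ z, z ≠ x → z ≠ y → m z * |f z| = 0 := by
        intro z hzx hzy; simp [hfdef, hzx, hzy]
      have hsum : ∑ z, m z * |f z| = 2 := by
        rw [Finset.sum_eq_add_of_mem x y (Finset.mem_univ x) (Finset.mem_univ y)
          (fun hh => hxy hh.symm) (fun z _ hz => hne z hz.1 hz.2)]
        have : f x = 1 / m x := by simp [hfdef]
        have hfy : f y = c := by simp [hfdef, hxy]
        rw [this, hfy, hcabs, abs_of_pos (one_div_pos.mpr (hm x))]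
        field_simp [(hm x).ne', (hm y).ne']
        norm_num
      have hJ : J.mulVec f x = J x x / m x + J x y * c := by
        have hne2 : ∀ z, z ≠ x → z ≠ y → J x z * f z = 0 := by
          intro z hzx hzy; simp [hfdef, hzx, hzy]
        show ∑ z, J x z * f z = _
        rw [Finset.sum_eq_add_of_mem x y (Finset.mem_univ x) (Finset.mem_univ y)
          (fun hh => hxy hh.symm) (fun z _ hz => hne2 z hz.1 hz.2)]
        simp [hfdef, hxy]
        ring
      have := h f x (by
        rw [hsum]
        have : f x = 1 / m x := by simp [hfdef]
        rw [this]
        have : m x * (1 / m x) = 1 := by field_simp [(hm x).ne']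
        rw [this]; norm_num)
      rw [hJ, hcmul] at this
      linarith
end

section
/- Let (X, δ, m) be a 1-dimensional cell complex (weighted graph) with edge x = (v,w), and let ρ : N(v,w) × N(w,v) → [0,∞) be arbitrary, where N(v,w) = S₁(v)∖{w}. Define A_ρ(v') := Q(v,v') − Σ_{w'} ρ(v',w') and B_ρ(w') := Q(w,w') − Σ_{v'} ρ(v',w'). Then for every f : X₀ → ℝ with |f(a)−f(b)| ≤ d(a,b) (1-Lipschitz for the combinatorial graph distance d) and f(w) − f(v) = 1: Δf(v) − Δf(w) ≥ Q(v,w) + Q(w,v) − Σ_{v'}|A_ρ(v')| − Σ_{w'}|B_ρ(w')| + Σ_{v',w'} ρ(v',w')(1 − d(v',w')), where Δf(u) := Σ_{u'} Q(u,u')(f(u') − f(u)). -/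
open Classical in
/-- One direction of the penalty-term transport-plan characterization of
Ollivier curvature of an edge `(v,w)` of a weighted graph: for every nonnegative
`ρ : N(v,w) × N(w,v) → [0,∞)` and every 1-Lipschitz `f` (for the combinatorial graph
distance) with `f(w) − f(v) = 1`,
`Δf(v) − Δf(w) ≥ Q(v,w) + Q(w,v) − ∑|A_ρ| − ∑|B_ρ| + ∑ ρ(v',w')(1 − d(v',w'))`. -/
theorem stmt_17 {V : Type*} [Fintype V]
    (me : V → V → ℝ) (hsym : ∀ a b, me a b = me b a) (hnn : ∀ a b, 0 ≤ me a b)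
    (hdiag : ∀ a, me a a = 0)
    (m : V → ℝ) (hm : ∀ a, 0 < m a)
    (G : SimpleGraph V) (hG : ∀ a b, G.Adj a b ↔ 0 < me a b)
    (hconn : G.Connected)
    (v w : V) (hadj : G.Adj v w)
    (ρ : V → V → ℝ) (hρ : ∀ a b, 0 ≤ ρ a b)
    (f : V → ℝ)
    (hlip : ∀ a b, |f a - f b| ≤ (G.dist a b : ℝ))
    (hfvw : f w - f v = 1) :
    let Q : V → V → ℝ := fun a b => me a b / m a
    let Δ : (V → ℝ) → V → ℝ := fun g u => ∑ u', Q u u' * (g u' - g u)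
    let Nvw : Finset V := Finset.univ.filter fun v' => G.Adj v v' ∧ v' ≠ w
    let Nwv : Finset V := Finset.univ.filter fun w' => G.Adj w w' ∧ w' ≠ v
    let A : V → ℝ := fun v' => Q v v' - ∑ w' ∈ Nwv, ρ v' w'
    let B : V → ℝ := fun w' => Q w w' - ∑ v' ∈ Nvw, ρ v' w'
    Q v w + Q w v - (∑ v' ∈ Nvw, |A v'|) - (∑ w' ∈ Nwv, |B w'|)
        + ∑ v' ∈ Nvw, ∑ w' ∈ Nwv, ρ v' w' * (1 - (G.dist v' w' : ℝ))
      ≤ Δ f v - Δ f w := by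
  intro Q Δ Nvw Nwv A B
  have hQ0 : ∀ a b, ¬ G.Adj a b → Q a b = 0 := by
    intro a b h
    have h0 : me a b = 0 :=
      le_antisymm (not_lt.1 fun h' => h ((hG a b).2 h')) (hnn a b)
    simp [Q, h0]
  have hdist1 : ∀ a b, G.Adj a b → G.dist a b = 1 := fun a b h =>
    (SimpleGraph.dist_eq_one_iff_adj).2 h
  have hsplit : ∀ (u uu : V), G.Adj u uu →
      Δ f u = Q u uu * (f uu - f u) +
        ∑ z ∈ Finset.univ.filter (fun x => G.Adj u x ∧ x ≠ uu), Q u z * (f z - f u) := by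
    intro u uu hu
    have huu : uu ∉ Finset.univ.filter (fun x => G.Adj u x ∧ x ≠ uu) := by simp
    have key : ∑ z : V, Q u z * (f z - f u) =
        ∑ z ∈ insert uu (Finset.univ.filter (fun x => G.Adj u x ∧ x ≠ uu)),
          Q u z * (f z - f u) := by
      refine (Finset.sum_subset (Finset.subset_univ _) ?_).symm
      intro z _ hz
      simp only [Finset.mem_insert, Finset.mem_filter, Finset.mem_univ, true_and] at hz
      push_neg at hz
      have : ¬ G.Adj u z := fun ha => hz.1 (hz.2 ha)
      rw [hQ0 u z this, zero_mul]
    rw [show Δ f u = ∑ z, Q u z * (f z - f u) from rfl, key, Finset.sum_insert huu]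
  have hv : Δ f v = Q v w * (f w - f v) + ∑ z ∈ Nvw, Q v z * (f z - f v) :=
    hsplit v w hadj
  have hw : Δ f w = Q w v * (f v - f w) + ∑ z ∈ Nwv, Q w z * (f z - f w) :=
    hsplit w v hadj.symm
  have hQA : ∀ v' ∈ Nvw, Q v v' = A v' + ∑ w' ∈ Nwv, ρ v' w' := by
    intro v' _; simp only [A]; ring
  have hQB : ∀ w' ∈ Nwv, Q w w' = B w' + ∑ v' ∈ Nvw, ρ v' w' := by
    intro w' _; simp only [B]; ring
  have eS1 : ∑ z ∈ Nvw, Q v z * (f z - f v) =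
      (∑ v' ∈ Nvw, A v' * (f v' - f v)) +
        ∑ v' ∈ Nvw, ∑ w' ∈ Nwv, ρ v' w' * (f v' - f v) := by
    rw [← Finset.sum_add_distrib]
    refine Finset.sum_congr rfl fun v' hv' => ?_
    rw [hQA v' hv', ← Finset.sum_mul]; ring
  have eS2 : ∑ z ∈ Nwv, Q w z * (f z - f w) =
      (∑ w' ∈ Nwv, B w' * (f w' - f w)) +
        ∑ v' ∈ Nvw, ∑ w' ∈ Nwv, ρ v' w' * (f w' - f w) := by
    rw [Finset.sum_comm (s := Nvw) (t := Nwv), ← Finset.sum_add_distrib]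
    refine Finset.sum_congr rfl fun w' hw' => ?_
    rw [hQB w' hw', ← Finset.sum_mul]; ring
  have hX : ∀ v' ∈ Nvw, |f v' - f v| ≤ 1 := by
    intro v' hv'
    simp only [Nvw, Finset.mem_filter, Finset.mem_univ, true_and] at hv'
    have := hlip v' v
    rwa [hdist1 v' v hv'.1.symm, Nat.cast_one] at this
  have hY : ∀ w' ∈ Nwv, |f w' - f w| ≤ 1 := by
    intro w' hw'
    simp only [Nwv, Finset.mem_filter, Finset.mem_univ, true_and] at hw'
    have := hlip w' w
    rwa [hdist1 w' w hw'.1.symm, Nat.cast_one] at this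
  have h1 : ∑ v' ∈ Nvw, (-|A v'|) ≤ ∑ v' ∈ Nvw, A v' * (f v' - f v) := by
    refine Finset.sum_le_sum fun v' hv' => ?_
    have h := hX v' hv'
    have habs : |A v' * (f v' - f v)| ≤ |A v'| := by
      rw [abs_mul]
      calc |A v'| * |f v' - f v| ≤ |A v'| * 1 :=
            mul_le_mul_of_nonneg_left h (abs_nonneg _)
        _ = |A v'| := mul_one _
    linarith [neg_abs_le (A v' * (f v' - f v))]
  have h2 : ∑ w' ∈ Nwv, (-|B w'|) ≤ ∑ w' ∈ Nwv, (-(B w' * (f w' - f w))) := by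
    refine Finset.sum_le_sum fun w' hw' => ?_
    have h := hY w' hw'
    have habs : |B w' * (f w' - f w)| ≤ |B w'| := by
      rw [abs_mul]
      calc |B w'| * |f w' - f w| ≤ |B w'| * 1 :=
            mul_le_mul_of_nonneg_left h (abs_nonneg _)
        _ = |B w'| := mul_one _
    linarith [le_abs_self (B w' * (f w' - f w))]
  have h3 : ∑ v' ∈ Nvw, ∑ w' ∈ Nwv, ρ v' w' * (1 - (G.dist v' w' : ℝ)) ≤
      ∑ v' ∈ Nvw, ∑ w' ∈ Nwv, ρ v' w' * ((f v' - f v) - (f w' - f w)) := by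
    refine Finset.sum_le_sum fun v' _ => Finset.sum_le_sum fun w' _ => ?_
    have hd : -(G.dist v' w' : ℝ) ≤ f v' - f w' := by
      have := hlip v' w'
      linarith [neg_abs_le (f v' - f w')]
    have : (1 : ℝ) - (G.dist v' w' : ℝ) ≤ (f v' - f v) - (f w' - f w) := by
      have : (f v' - f v) - (f w' - f w) = (f v' - f w') + (f w - f v) := by ring
      rw [this, hfvw]; linarith
    exact mul_le_mul_of_nonneg_left this (hρ v' w')
  have hdouble : ∑ v' ∈ Nvw, ∑ w' ∈ Nwv, ρ v' w' * ((f v' - f v) - (f w' - f w)) =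
      (∑ v' ∈ Nvw, ∑ w' ∈ Nwv, ρ v' w' * (f v' - f v)) -
        ∑ v' ∈ Nvw, ∑ w' ∈ Nwv, ρ v' w' * (f w' - f w) := by
    rw [← Finset.sum_sub_distrib]
    refine Finset.sum_congr rfl fun v' _ => ?_
    rw [← Finset.sum_sub_distrib]
    exact Finset.sum_congr rfl fun w' _ => by ring
  rw [hv, hw, hfvw, eS1, eS2]
  have hfvw' : f v - f w = -1 := by linarith
  rw [hfvw']
  have hs1 : ∑ v' ∈ Nvw, (-|A v'|) = -∑ v' ∈ Nvw, |A v'| := by rw [Finset.sum_neg_distrib]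
  have hs2 : ∑ w' ∈ Nwv, (-(B w' * (f w' - f w))) = -∑ w' ∈ Nwv, B w' * (f w' - f w) := by
    rw [Finset.sum_neg_distrib]
  have hs3 : ∑ w' ∈ Nwv, (-|B w'|) = -∑ w' ∈ Nwv, |B w'| := by rw [Finset.sum_neg_distrib]
  rw [hs1] at h1
  rw [hs2] at h2
  rw [hs3] at h2
  rw [hdouble] at h3
  linarith
end

section
/- Let X be a finite set with weight m, H selfadjoint on ℓ²(X,m), ω : X → (0,∞), and R ∈ ℝ. Then F_ω(x) := H x(x) − Σ_{y≠x}(ω(y)/ω(x))|H y(x)| ≥ R for all x ∈ X if and only if ‖e^{-tH} f‖_{ω,∞} ≤ e^{-Rt} ‖f‖_{ω,∞} for all t ≥ 0 and f : X → ℝ, where ‖f‖_{ω,∞} := max_x |f(x)|/ω(x). -/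
open NormedSpace Finset Filter Set Topology

section Aux

variable {X : Type*} [Fintype X] [DecidableEq X]

private theorem exp_entry_hasSum (M : Matrix X X ℝ) (x y : X) :
    HasSum (fun n : ℕ => ((n.factorial : ℝ))⁻¹ * (M ^ n) x y) (NormedSpace.exp M x y) := by
  letI : SeminormedRing (Matrix X X ℝ) := Matrix.linftyOpSemiNormedRing
  letI : NormedRing (Matrix X X ℝ) := Matrix.linftyOpNormedRing
  letI : NormedAlgebra ℝ (Matrix X X ℝ) := Matrix.linftyOpNormedAlgebra
  have hs : Summable fun n : ℕ => ((n.factorial : ℝ))⁻¹ • M ^ n := expSeries_summable' M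
  have h1 : HasSum (fun n : ℕ => ((n.factorial : ℝ))⁻¹ • M ^ n) (exp M) := by
    rw [exp_eq_tsum (𝕂 := ℝ)]; exact hs.hasSum
  let L : Matrix X X ℝ →ₗ[ℝ] ℝ :=
    { toFun := fun A => A x y
      map_add' := fun A B => rfl
      map_smul' := fun r A => rfl }
  have hL : Continuous L := L.continuous_of_finiteDimensional
  exact h1.map L.toAddMonoidHom hL

private theorem exp_scalar_smul_one (c : ℝ) :
    NormedSpace.exp (c • (1 : Matrix X X ℝ)) = Real.exp c • (1 : Matrix X X ℝ) := by
  letI : SeminormedRing (Matrix X X ℝ) := Matrix.linftyOpSemiNormedRing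
  letI : NormedRing (Matrix X X ℝ) := Matrix.linftyOpNormedRing
  letI : NormedAlgebra ℝ (Matrix X X ℝ) := Matrix.linftyOpNormedAlgebra
  rw [← Algebra.algebraMap_eq_smul_one]
  have := algebraMap_exp_comm (𝔸 := Matrix X X ℝ) c
  rw [← Real.exp_eq_exp_ℝ] at this
  convert this.symm using 1
  · rfl
  · rw [Algebra.algebraMap_eq_smul_one]

private theorem pow_entry_nonneg (N : Matrix X X ℝ) (hN : ∀ x y, 0 ≤ N x y) :
    ∀ (n : ℕ) (x y : X), 0 ≤ (N ^ n) x y := by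
  intro n
  induction n with
  | zero =>
    intro x y
    rcases eq_or_ne x y with h | h <;> simp [pow_zero, Matrix.one_apply, h]
  | succ n ih =>
    intro x y
    rw [pow_succ, Matrix.mul_apply]
    exact Finset.sum_nonneg fun z _ => mul_nonneg (ih x z) (hN z y)

private theorem rowsum_pow_le (N : Matrix X X ℝ) (hN : ∀ x y, 0 ≤ N x y)
    (s : ℝ) (hs : 0 ≤ s) (h : ∀ x, ∑ y, N x y ≤ s) :
    ∀ (n : ℕ) (x : X), ∑ y, (N ^ n) x y ≤ s ^ n := by
  intro n
  induction n with
  | zero => intro x; simp [pow_zero, Matrix.one_apply]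
  | succ n ih =>
    intro x
    calc ∑ y, (N ^ (n + 1)) x y = ∑ z, N x z * ∑ y, (N ^ n) z y := by
          rw [pow_succ']
          simp_rw [Matrix.mul_apply, Finset.mul_sum]
          rw [Finset.sum_comm]
      _ ≤ ∑ z, N x z * s ^ n :=
          Finset.sum_le_sum fun z _ => mul_le_mul_of_nonneg_left (ih z) (hN x z)
      _ ≤ s * s ^ n := by
          rw [← Finset.sum_mul]
          exact mul_le_mul_of_nonneg_right (h x) (pow_nonneg hs n)
      _ = s ^ (n + 1) := (pow_succ' s n).symm

private theorem abs_pow_entry_le (B N : Matrix X X ℝ) (w : X → ℝ) (hw : ∀ x, 0 ≤ w x)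
    (hN : ∀ x y, 0 ≤ N x y)
    (h : ∀ x y, |B x y| * w y ≤ w x * N x y) :
    ∀ (n : ℕ) (x y : X), |(B ^ n) x y| * w y ≤ w x * (N ^ n) x y := by
  intro n
  induction n with
  | zero =>
    intro x y
    rcases eq_or_ne x y with hxy | hxy
    · subst hxy; simp [pow_zero, Matrix.one_apply]
    · simp [pow_zero, Matrix.one_apply, hxy]
  | succ n ih =>
    intro x y
    rw [pow_succ, pow_succ, Matrix.mul_apply, Matrix.mul_apply]
    calc |∑ z, (B ^ n) x z * B z y| * w y
        ≤ (∑ z, |(B ^ n) x z| * |B z y|) * w y := by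
          refine mul_le_mul_of_nonneg_right ?_ (hw y)
          simpa [abs_mul] using Finset.abs_sum_le_sum_abs (fun z => (B ^ n) x z * B z y) univ
      _ = ∑ z, |(B ^ n) x z| * (|B z y| * w y) := by
          rw [Finset.sum_mul]; simp [mul_assoc]
      _ ≤ ∑ z, |(B ^ n) x z| * (w z * N z y) :=
          Finset.sum_le_sum fun z _ =>
            mul_le_mul_of_nonneg_left (h z y) (abs_nonneg _)
      _ = ∑ z, (|(B ^ n) x z| * w z) * N z y := by simp [mul_assoc, mul_comm, mul_left_comm]
      _ ≤ ∑ z, (w x * (N ^ n) x z) * N z y :=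
          Finset.sum_le_sum fun z _ => mul_le_mul_of_nonneg_right (ih x z) (hN z y)
      _ = w x * ∑ z, (N ^ n) x z * N z y := by rw [Finset.mul_sum]; simp [mul_assoc]

private theorem deriv_piece (H : Matrix X X ℝ) (f : X → ℝ) (x : X) :
    HasDerivAt (fun u : ℝ => (NormedSpace.exp (u • (-H))).mulVec f x)
      (((-H).mulVec f) x) 0 := by
  letI : SeminormedRing (Matrix X X ℝ) := Matrix.linftyOpSemiNormedRing
  letI : NormedRing (Matrix X X ℝ) := Matrix.linftyOpNormedRing
  letI : NormedAlgebra ℝ (Matrix X X ℝ) := Matrix.linftyOpNormedAlgebra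
  have h1 : HasDerivAt (fun u : ℝ => exp (u • (-H))) (-H) 0 := by
    have h0 := hasDerivAt_exp_smul_const (𝕂 := ℝ) (-H) 0
    rw [zero_smul, exp_zero, one_mul] at h0
    exact h0
  let L : Matrix X X ℝ →ₗ[ℝ] ℝ :=
    { toFun := fun M => M.mulVec f x
      map_add' := fun A B => by simp [Matrix.add_mulVec]
      map_smul' := fun r A => by simp [Matrix.smul_mulVec] }
  have hL := (LinearMap.toContinuousLinearMap L).hasFDerivAt.comp_hasDerivAt 0 h1
  exact hL

end Aux

/-- Weighted Forman curvature semigroup characterization (`p = ∞`):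
`F_ω(x) = H x(x) − ∑_{y≠x} (ω(y)/ω(x))|H y(x)| ≥ R` for all `x` iff
`‖e^{-tH} f‖_{ω,∞} ≤ e^{-Rt} ‖f‖_{ω,∞}` for all `t ≥ 0` and all `f`, where
`‖f‖_{ω,∞} = max_x |f(x)|/ω(x)`. -/
theorem stmt_19 {X : Type*} [Fintype X] [DecidableEq X] [Nonempty X]
    (m ω : X → ℝ) (hm : ∀ x, 0 < m x) (hω : ∀ x, 0 < ω x)
    (H : Matrix X X ℝ)
    (hsa : ∀ x y, m x * H x y = m y * H y x)
    (R : ℝ) :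
    (∀ x, R ≤ H x x - ∑ y ∈ Finset.univ.erase x, ω y / ω x * |H x y|) ↔
      (∀ t : ℝ, 0 ≤ t → ∀ f : X → ℝ,
        (⨆ x, |(NormedSpace.exp (-(t • H))).mulVec f x| / ω x)
          ≤ Real.exp (-R * t) * ⨆ x, |f x| / ω x) := by
  constructor
  · -- curvature bound ⇒ semigroup contraction
    intro h t ht f
    -- the weighted sup norm of `f`
    set C : ℝ := ⨆ x, |f x| / ω x with hCdef
    have hbdd : ∀ g : X → ℝ, BddAbove (Set.range g) := fun g =>
      Set.Finite.bddAbove (Set.finite_range g)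
    have hC0 : 0 ≤ C := by
      have := le_ciSup (hbdd fun x => |f x| / ω x) (Classical.arbitrary X)
      rw [← hCdef] at this
      exact le_trans (div_nonneg (abs_nonneg _) (hω (Classical.arbitrary X)).le) this
    have hfC : ∀ y, |f y| ≤ C * ω y := fun y => by
      have := le_ciSup (hbdd fun x => |f x| / ω x) y
      rw [← hCdef] at this
      calc |f y| = |f y| / ω y * ω y := (div_mul_cancel₀ _ (hω y).ne').symm
        _ ≤ C * ω y := mul_le_mul_of_nonneg_right this (hω y).le
    -- the diagonal shift
    set M₀ : ℝ := (Finset.univ.sup' Finset.univ_nonempty fun z => H z z) ⊔ 0 with hM₀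
    have hM₀x : ∀ x, H x x ≤ M₀ := fun x =>
      le_trans (Finset.le_sup' (fun z => H z z) (mem_univ x)) le_sup_left
    have hRM : R ≤ M₀ := by
      obtain ⟨x⟩ := ‹Nonempty X›
      refine le_trans (le_trans (h x) ?_) (hM₀x x)
      have : (0:ℝ) ≤ ∑ y ∈ Finset.univ.erase x, ω y / ω x * |H x y| :=
        Finset.sum_nonneg fun y _ =>
          mul_nonneg (div_nonneg (hω y).le (hω x).le) (abs_nonneg _)
      linarith
    set c : ℝ := t * M₀ with hc
    have hcx : ∀ x, t * H x x ≤ c := fun x => mul_le_mul_of_nonneg_left (hM₀x x) ht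
    set s : ℝ := c - t * R with hs
    have hs0 : 0 ≤ s := by
      have := mul_le_mul_of_nonneg_left hRM ht
      simp only [hs, hc]; linarith
    set B : Matrix X X ℝ := c • (1 : Matrix X X ℝ) - t • H with hB
    have hBd : ∀ x, B x x = c - t * H x x := fun x => by
      simp [hB, Matrix.sub_apply, Matrix.smul_apply, Matrix.one_apply_eq, smul_eq_mul]
    have hBo : ∀ x y, x ≠ y → B x y = -(t * H x y) := fun x y hxy => by
      simp [hB, Matrix.sub_apply, Matrix.smul_apply, Matrix.one_apply_ne hxy, smul_eq_mul]
    -- splitting the exponential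
    have hexp : NormedSpace.exp (-(t • H)) = Real.exp (-c) • NormedSpace.exp B := by
      have hsplit : -(t • H) = B + (-c) • (1 : Matrix X X ℝ) := by
        rw [hB, neg_smul]; abel
      rw [hsplit, Matrix.exp_add_of_commute B _ ((Commute.one_right B).smul_right (-c)),
        exp_scalar_smul_one, mul_smul_comm, mul_one]
    -- the comparison matrix
    set N : Matrix X X ℝ := Matrix.of fun x y => |B x y| * ω y / ω x with hN
    have hN0 : ∀ x y, 0 ≤ N x y := fun x y =>
      div_nonneg (mul_nonneg (abs_nonneg _) (hω y).le) (hω x).le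
    have hdom : ∀ x y, |B x y| * ω y ≤ ω x * N x y := fun x y => by
      have : ω x * N x y = |B x y| * ω y := by
        show ω x * (|B x y| * ω y / ω x) = |B x y| * ω y
        rw [mul_comm, div_mul_cancel₀ _ (hω x).ne']
      rw [this]
    have hrow : ∀ x, ∑ y, N x y ≤ s := by
      intro x
      rw [← Finset.add_sum_erase univ _ (mem_univ x)]
      have h1 : N x x = c - t * H x x := by
        show |B x x| * ω x / ω x = c - t * H x x
        rw [hBd x, abs_of_nonneg (by linarith [hcx x] : (0:ℝ) ≤ c - t * H x x),
          mul_div_cancel_right₀ _ (hω x).ne']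
      have h2 : ∀ y ∈ univ.erase x, N x y = t * (ω y / ω x * |H x y|) := by
        intro y hy
        have hyx : x ≠ y := (Finset.ne_of_mem_erase hy).symm
        show |B x y| * ω y / ω x = t * (ω y / ω x * |H x y|)
        rw [hBo x y hyx, abs_neg, abs_mul, abs_of_nonneg ht]
        ring
      rw [h1, Finset.sum_congr rfl h2, ← Finset.mul_sum]
      have h3 := mul_le_mul_of_nonneg_left (by linarith [h x] :
        ∑ y ∈ univ.erase x, ω y / ω x * |H x y| ≤ H x x - R) ht
      simp only [hs]
      linarith
    -- entrywise bound on powers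
    have hpow := abs_pow_entry_le B N ω (fun x => (hω x).le) hN0 hdom
    -- summability facts
    have hNsum : ∀ x y, Summable fun n : ℕ => ((n.factorial : ℝ))⁻¹ * (N ^ n) x y := by
      intro x y
      refine Summable.of_nonneg_of_le
        (fun n => mul_nonneg (by positivity) (pow_entry_nonneg N hN0 n x y))
        (fun n => ?_)
        ((Real.summable_pow_div_factorial s).congr fun n => div_eq_mul_inv _ _)
      have hentry : (N ^ n) x y ≤ s ^ n := by
        refine le_trans ?_ (rowsum_pow_le N hN0 s hs0 hrow n x)
        exact Finset.single_le_sum (fun z _ => pow_entry_nonneg N hN0 n x z) (mem_univ y)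
      calc ((n.factorial : ℝ))⁻¹ * (N ^ n) x y ≤ ((n.factorial : ℝ))⁻¹ * s ^ n :=
            mul_le_mul_of_nonneg_left hentry (by positivity)
        _ = s ^ n * ((n.factorial : ℝ))⁻¹ := by ring
    -- now fix `x` and do the entrywise estimate
    refine ciSup_le fun x => ?_
    have hBsum : ∀ y, Summable fun n : ℕ => ((n.factorial : ℝ))⁻¹ * |(B ^ n) x y| := by
      intro y
      refine Summable.of_nonneg_of_le (fun n => by positivity) (fun n => ?_)
        ((hNsum x y).mul_left (ω x / ω y))
      rw [div_mul_eq_mul_div, le_div_iff₀ (hω y)]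
      calc ((n.factorial : ℝ))⁻¹ * |(B ^ n) x y| * ω y
          = ((n.factorial : ℝ))⁻¹ * (|(B ^ n) x y| * ω y) := by ring
        _ ≤ ((n.factorial : ℝ))⁻¹ * (ω x * (N ^ n) x y) :=
            mul_le_mul_of_nonneg_left (hpow n x y) (by positivity)
        _ = ω x * (((n.factorial : ℝ))⁻¹ * (N ^ n) x y) := by ring
    have hEbound : ∀ y, |NormedSpace.exp B x y| * ω y
        ≤ ω x * ∑' n : ℕ, ((n.factorial : ℝ))⁻¹ * (N ^ n) x y := by
      intro y
      have habs : ∀ n : ℕ, |((n.factorial : ℝ))⁻¹ * (B ^ n) x y|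
          = ((n.factorial : ℝ))⁻¹ * |(B ^ n) x y| := fun n => by
        rw [abs_mul, abs_of_nonneg (by positivity : (0:ℝ) ≤ ((n.factorial : ℝ))⁻¹)]
      have h1 : |NormedSpace.exp B x y|
          ≤ ∑' n : ℕ, ((n.factorial : ℝ))⁻¹ * |(B ^ n) x y| := by
        calc |NormedSpace.exp B x y|
            = |∑' n : ℕ, ((n.factorial : ℝ))⁻¹ * (B ^ n) x y| := by
              rw [(exp_entry_hasSum B x y).tsum_eq]
          _ ≤ ∑' n : ℕ, ((n.factorial : ℝ))⁻¹ * |(B ^ n) x y| := by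
              have hnorm := norm_tsum_le_tsum_norm
                ((hBsum y).congr fun n => by rw [Real.norm_eq_abs, habs n])
              rw [Real.norm_eq_abs] at hnorm
              exact le_trans hnorm (le_of_eq (tsum_congr fun n => by
                rw [Real.norm_eq_abs, habs n]))
      calc |NormedSpace.exp B x y| * ω y
          ≤ (∑' n : ℕ, ((n.factorial : ℝ))⁻¹ * |(B ^ n) x y|) * ω y :=
            mul_le_mul_of_nonneg_right h1 (hω y).le
        _ = ∑' n : ℕ, ((n.factorial : ℝ))⁻¹ * |(B ^ n) x y| * ω y := tsum_mul_right.symm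
        _ ≤ ∑' n : ℕ, ω x * (((n.factorial : ℝ))⁻¹ * (N ^ n) x y) := by
            refine Summable.tsum_le_tsum (fun n => ?_) ((hBsum y).mul_right (ω y))
              ((hNsum x y).mul_left (ω x))
            calc ((n.factorial : ℝ))⁻¹ * |(B ^ n) x y| * ω y
                = ((n.factorial : ℝ))⁻¹ * (|(B ^ n) x y| * ω y) := by ring
              _ ≤ ((n.factorial : ℝ))⁻¹ * (ω x * (N ^ n) x y) :=
                  mul_le_mul_of_nonneg_left (hpow n x y) (by positivity)
              _ = ω x * (((n.factorial : ℝ))⁻¹ * (N ^ n) x y) := by ring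
        _ = ω x * ∑' n : ℕ, ((n.factorial : ℝ))⁻¹ * (N ^ n) x y := tsum_mul_left
    have hT : ∑ y, ∑' n : ℕ, ((n.factorial : ℝ))⁻¹ * (N ^ n) x y ≤ Real.exp s := by
      have hswap : ∑ y, ∑' n : ℕ, ((n.factorial : ℝ))⁻¹ * (N ^ n) x y
          = ∑' n : ℕ, ∑ y, ((n.factorial : ℝ))⁻¹ * (N ^ n) x y :=
        (Summable.tsum_finsetSum fun y _ => hNsum x y).symm
      rw [hswap]
      have hle : ∀ n : ℕ, ∑ y, ((n.factorial : ℝ))⁻¹ * (N ^ n) x y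
          ≤ ((n.factorial : ℝ))⁻¹ * s ^ n := fun n => by
        rw [← Finset.mul_sum]
        exact mul_le_mul_of_nonneg_left (rowsum_pow_le N hN0 s hs0 hrow n x) (by positivity)
      have hsum1 : Summable fun n : ℕ => ∑ y, ((n.factorial : ℝ))⁻¹ * (N ^ n) x y :=
        summable_sum fun y _ => hNsum x y
      have hsum2 : Summable fun n : ℕ => ((n.factorial : ℝ))⁻¹ * s ^ n :=
        (Real.summable_pow_div_factorial s).congr fun n => by
          rw [div_eq_mul_inv, mul_comm]
      refine le_trans (Summable.tsum_le_tsum hle hsum1 hsum2) ?_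
      have hexp_s : Real.exp s = ∑' n : ℕ, s ^ n / (n.factorial : ℝ) := by
        rw [Real.exp_eq_exp_ℝ, NormedSpace.exp_eq_tsum_div]
      rw [hexp_s]
      exact le_of_eq (tsum_congr fun n => by rw [div_eq_mul_inv, mul_comm])
    have hv : |(NormedSpace.exp B).mulVec f x| ≤ C * (ω x * Real.exp s) := by
      have hmv : (NormedSpace.exp B).mulVec f x
          = ∑ y, NormedSpace.exp B x y * f y := by
        simp [Matrix.mulVec, dotProduct]
      rw [hmv]
      calc |∑ y, NormedSpace.exp B x y * f y|
          ≤ ∑ y, |NormedSpace.exp B x y * f y| := Finset.abs_sum_le_sum_abs _ _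
        _ = ∑ y, |NormedSpace.exp B x y| * |f y| := by simp [abs_mul]
        _ ≤ ∑ y, |NormedSpace.exp B x y| * (C * ω y) :=
            Finset.sum_le_sum fun y _ =>
              mul_le_mul_of_nonneg_left (hfC y) (abs_nonneg _)
        _ = ∑ y, C * (|NormedSpace.exp B x y| * ω y) :=
            Finset.sum_congr rfl fun y _ => by ring
        _ = C * ∑ y, |NormedSpace.exp B x y| * ω y := (Finset.mul_sum _ _ _).symm
        _ ≤ C * ∑ y, ω x * ∑' n : ℕ, ((n.factorial : ℝ))⁻¹ * (N ^ n) x y :=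
            mul_le_mul_of_nonneg_left
              (Finset.sum_le_sum fun y _ => hEbound y) hC0
        _ = C * (ω x * ∑ y, ∑' n : ℕ, ((n.factorial : ℝ))⁻¹ * (N ^ n) x y) := by
            rw [← Finset.mul_sum]
        _ ≤ C * (ω x * Real.exp s) :=
            mul_le_mul_of_nonneg_left
              (mul_le_mul_of_nonneg_left hT (hω x).le) hC0
    rw [hexp, Matrix.smul_mulVec, Pi.smul_apply, smul_eq_mul, abs_mul,
      abs_of_pos (Real.exp_pos (-c)), div_le_iff₀ (hω x)]
    calc Real.exp (-c) * |(NormedSpace.exp B).mulVec f x|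
        ≤ Real.exp (-c) * (C * (ω x * Real.exp s)) :=
          mul_le_mul_of_nonneg_left hv (Real.exp_pos _).le
      _ = Real.exp (-c) * Real.exp s * C * ω x := by ring
      _ = Real.exp (-R * t) * C * ω x := by
          rw [← Real.exp_add, show -c + s = -R * t from by rw [hs]; ring]
  · -- semigroup contraction ⇒ curvature bound
    intro hsem x
    set f : X → ℝ := fun y => if y = x then ω x else if 0 ≤ H x y then -(ω y) else ω y with hf
    have hfabs : ∀ y, |f y| = ω y := by
      intro y
      by_cases h1 : y = x
      · simp [hf, h1, abs_of_pos (hω x)]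
      · by_cases h2 : 0 ≤ H x y <;>
          simp [hf, h1, h2, abs_of_pos (hω y)]
    have hsup1 : (⨆ y, |f y| / ω y) = (1:ℝ) := by
      have hone : ∀ y, |f y| / ω y = 1 := fun y => by
        rw [hfabs y]; exact div_self (hω y).ne'
      simp only [hone, ciSup_const]
    have hb : ∀ u : ℝ, 0 ≤ u →
        (NormedSpace.exp (u • (-H))).mulVec f x ≤ Real.exp (-R * u) * ω x := by
      intro u hu
      have h2 := hsem u hu f
      rw [hsup1, mul_one] at h2
      have h3 : |(NormedSpace.exp (-(u • H))).mulVec f x| / ω x ≤ Real.exp (-R * u) :=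
        le_trans (le_ciSup (Set.Finite.bddAbove (Set.finite_range
          (fun x => |(NormedSpace.exp (-(u • H))).mulVec f x| / ω x))) x) h2
      have h4 := (div_le_iff₀ (hω x)).mp h3
      calc (NormedSpace.exp (u • (-H))).mulVec f x
          ≤ |(NormedSpace.exp (u • (-H))).mulVec f x| := le_abs_self _
        _ ≤ Real.exp (-R * u) * ω x := by rw [smul_neg]; exact h4
    have hphi0 : (NormedSpace.exp ((0:ℝ) • (-H))).mulVec f x = ω x := by
      simp [hf, NormedSpace.exp_zero, Matrix.one_mulVec]
    set ψ : ℝ → ℝ := fun u =>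
      (NormedSpace.exp (u • (-H))).mulVec f x - Real.exp (-R * u) * ω x with hψ
    have hψd : HasDerivAt ψ ((-H).mulVec f x + R * ω x) 0 := by
      have hd2 : HasDerivAt (fun u : ℝ => Real.exp (-R * u) * ω x) (-R * ω x) 0 := by
        have h5 := (((hasDerivAt_id (0:ℝ)).const_mul (-R)).exp).mul_const (ω x)
        simpa using h5
      have h6 := (deriv_piece H f x).sub hd2
      rw [show (-H).mulVec f x + R * ω x = (-H).mulVec f x - -R * ω x by ring]
      exact h6
    have hψ0 : ψ 0 = 0 := by
      simp only [hψ, hphi0]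
      simp
    have hD : (-H).mulVec f x + R * ω x ≤ 0 := by
      have htend := hasDerivAt_iff_tendsto_slope.mp hψd
      have hmono : Tendsto (slope ψ 0) (𝓝[>] (0:ℝ))
          (𝓝 ((-H).mulVec f x + R * ω x)) :=
        htend.mono_left (nhdsWithin_mono _ fun u hu =>
          Set.mem_compl_singleton_iff.mpr (ne_of_gt (Set.mem_Ioi.mp hu)))
      refine le_of_tendsto hmono ?_
      filter_upwards [self_mem_nhdsWithin] with u hu
      have hu0 : 0 < u := hu
      have hψu : ψ u ≤ 0 := sub_nonpos.mpr (hb u hu0.le)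
      rw [slope_def_field, hψ0, sub_zero, sub_zero]
      exact div_nonpos_iff.mpr (Or.inr ⟨hψu, hu0.le⟩)
    have hmv : (-H).mulVec f x = -∑ y, H x y * f y := by
      simp [Matrix.mulVec, dotProduct, Matrix.neg_apply, neg_mul]
    have h6 : ∑ y, H x y * f y
        = H x x * ω x - ∑ y ∈ Finset.univ.erase x, |H x y| * ω y := by
      rw [← Finset.add_sum_erase Finset.univ (fun y => H x y * f y) (mem_univ x)]
      have hfx : f x = ω x := by simp [hf]
      have h7 : ∀ y ∈ Finset.univ.erase x, H x y * f y = -(|H x y| * ω y) := by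
        intro y hy
        have hyx : y ≠ x := Finset.ne_of_mem_erase hy
        by_cases h8 : 0 ≤ H x y
        · simp only [hf]; rw [if_neg hyx, if_pos h8, abs_of_nonneg h8]; ring
        · simp only [hf]; rw [if_neg hyx, if_neg h8, abs_of_neg (lt_of_not_ge h8)]; ring
      rw [hfx, Finset.sum_congr rfl h7, Finset.sum_neg_distrib]
      ring
    rw [hmv, h6] at hD
    have hS : ∑ y ∈ Finset.univ.erase x, ω y / ω x * |H x y|
        = (∑ y ∈ Finset.univ.erase x, |H x y| * ω y) / ω x := by
      rw [Finset.sum_div]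
      exact Finset.sum_congr rfl fun y _ => by ring
    rw [hS, le_sub_comm, div_le_iff₀ (hω x), sub_mul]
    linarith
end
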